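/- Let (S_t)_{t>0} and (T_t)_{t>0} be two positivity preserving bounded C₀-semigroups on 𝔊₁^sa with generators −H and −L respectively, and suppose in addition that D(H) ⊆ D(L). Then S_t ≤ T_t for all t > 0 if and only if the operator H − L (with domain D(H)) is positivity preserving. -/

import Mathlib

open scoped ComplexOrder
open Filter Topology
set_option linter.unusedSectionVars false
set_option linter.unusedVariables false
set_option maxHeartbeats 1000000
set_option synthInstance.maxHeartbeats 400000

noncomputable section

namespace KatoReg

variable {H : Type*} [NormedAddCommGroup H] [InnerProductSpace ℂ H] [CompleteSpace H]

/-- `u ≥ 0` : `(u x, x) ≥ 0` for all `x ∈ H`. -/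
def PosOp (u : H →L[ℂ] H) : Prop := ∀ x : H, 0 ≤ (inner ℂ x (u x) : ℂ)

/-- The rank-one operator `z ↦ ⟪y, z⟫ • x`. -/
def rankOne (x y : H) : H →L[ℂ] H :=
  (ContinuousLinearMap.toSpanSingleton ℂ x).comp (innerSL ℂ y)

/-- A bounded operator is trace class (nuclear) if it is an absolutely convergent sum
of rank-one operators built from vectors in the closed unit ball. -/
def IsTraceClass (u : H →L[ℂ] H) : Prop :=
  ∃ (c : ℕ → ℝ) (e f : ℕ → H), (∀ n, 0 ≤ c n) ∧ (∀ n, ‖e n‖ ≤ 1) ∧ (∀ n, ‖f n‖ ≤ 1)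
    ∧ Summable c ∧ HasSum (fun n => c n • rankOne (e n) (f n)) u

/-- The trace norm `‖u‖₁`. -/
def traceNorm (u : H →L[ℂ] H) : ℝ :=
  sInf { s : ℝ | ∃ (c : ℕ → ℝ) (e f : ℕ → H), (∀ n, 0 ≤ c n) ∧ (∀ n, ‖e n‖ ≤ 1) ∧
    (∀ n, ‖f n‖ ≤ 1) ∧ HasSum c s ∧ HasSum (fun n => c n • rankOne (e n) (f n)) u }

/-- Membership in `𝔊₁ˢᵃ`, the self-adjoint trace class operators. -/
def Gsa (u : H →L[ℂ] H) : Prop := IsTraceClass u ∧ IsSelfAdjoint u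

/-- Membership in `𝔊₁⁺`, the positive trace class operators. -/
def Gpos (u : H →L[ℂ] H) : Prop := IsTraceClass u ∧ PosOp u

/-- The trace, computed in a fixed Hilbert basis of `H`. -/
def Trace (u : H →L[ℂ] H) : ℝ :=
  ∑' i : (exists_hilbertBasis ℂ H).choose,
    (inner ℂ ((exists_hilbertBasis ℂ H).choose_spec.choose i)
      (u ((exists_hilbertBasis ℂ H).choose_spec.choose i)) : ℂ).re
/-- The absolute value `|u|` of a (self-adjoint) bounded operator, via the
continuous functional calculus. -/
def absOp (u : H →L[ℂ] H) : H →L[ℂ] H := cfc (fun x : ℝ => |x|) u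

/-- `D` is a (real) subspace of `𝔊₁ˢᵃ`. -/
structure IsDom (D : Set (H →L[ℂ] H)) : Prop where
  subset : ∀ u ∈ D, Gsa u
  zero_mem : (0 : H →L[ℂ] H) ∈ D
  add_mem : ∀ u ∈ D, ∀ v ∈ D, u + v ∈ D
  smul_mem : ∀ (c : ℝ), ∀ u ∈ D, c • u ∈ D

/-- `K` is a linear operator from `D ⊆ 𝔊₁ˢᵃ` into `𝔊₁ˢᵃ`. -/
structure IsLinMap (D : Set (H →L[ℂ] H)) (K : (H →L[ℂ] H) → (H →L[ℂ] H)) : Prop where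
  maps : ∀ u ∈ D, Gsa (K u)
  map_add : ∀ u ∈ D, ∀ v ∈ D, K (u + v) = K u + K v
  map_smul : ∀ (c : ℝ), ∀ u ∈ D, K (c • u) = c • K u

/-- `K` (defined on `D`) is positivity preserving. -/
def PosPres (D : Set (H →L[ℂ] H)) (K : (H →L[ℂ] H) → (H →L[ℂ] H)) : Prop :=
  ∀ u ∈ D, PosOp u → PosOp (K u)

/-- The set of all of `𝔊₁ˢᵃ`, as a domain. -/
def GsaSet (H : Type*) [NormedAddCommGroup H] [InnerProductSpace ℂ H] [CompleteSpace H] :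
    Set (H →L[ℂ] H) :=
  { u | Gsa u }

/-- A bounded (everywhere defined) operator on `𝔊₁ˢᵃ`. -/
structure IsBddOp (A : (H →L[ℂ] H) → (H →L[ℂ] H)) : Prop where
  lin : IsLinMap (GsaSet H) A
  bdd : ∃ M : ℝ, ∀ u, Gsa u → traceNorm (A u) ≤ M * traceNorm u

/-- The operator norm of an operator on `𝔊₁ˢᵃ` with respect to the trace norm. -/
def opNorm₁ (A : (H →L[ℂ] H) → (H →L[ℂ] H)) : ℝ :=
  sInf { M : ℝ | 0 ≤ M ∧ ∀ u, Gsa u → traceNorm (A u) ≤ M * traceNorm u }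

/-- `S` is a `C₀`-semigroup on `𝔊₁ˢᵃ` (with respect to the trace norm). -/
structure IsC0Semigroup (S : ℝ → (H →L[ℂ] H) → (H →L[ℂ] H)) : Prop where
  lin : ∀ t : ℝ, 0 < t → IsLinMap (GsaSet H) (S t)
  comp : ∀ s t : ℝ, 0 < s → 0 < t → ∀ u, Gsa u → S (s + t) u = S s (S t u)
  strong : ∀ u, Gsa u →
    Tendsto (fun t : ℝ => traceNorm (S t u - u)) (nhdsWithin 0 (Set.Ioi 0)) (nhds 0)

/-- `S` is a contraction semigroup for the trace norm. -/
def IsContractionSG (S : ℝ → (H →L[ℂ] H) → (H →L[ℂ] H)) : Prop :=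
  ∀ t : ℝ, 0 < t → ∀ u, Gsa u → traceNorm (S t u) ≤ traceNorm u

/-- `S` is a bounded semigroup for the trace norm. -/
def IsBoundedSG (S : ℝ → (H →L[ℂ] H) → (H →L[ℂ] H)) : Prop :=
  ∃ M : ℝ, ∀ t : ℝ, 0 < t → ∀ u, Gsa u → traceNorm (S t u) ≤ M * traceNorm u

/-- `S` is a positivity preserving semigroup. -/
def IsPosPresSG (S : ℝ → (H →L[ℂ] H) → (H →L[ℂ] H)) : Prop :=
  ∀ t : ℝ, 0 < t → ∀ u, Gpos u → PosOp (S t u)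

/-- `-A`, with domain `D`, is the generator of the semigroup `S`:  on `D` one has
`A u = lim_{t ↓ 0} (u - S_t u)/t` in trace norm, and `D` consists of exactly those
`u ∈ 𝔊₁ˢᵃ` for which this limit exists in `𝔊₁ˢᵃ`. -/
structure GeneratesNeg (S : ℝ → (H →L[ℂ] H) → (H →L[ℂ] H))
    (D : Set (H →L[ℂ] H)) (A : (H →L[ℂ] H) → (H →L[ℂ] H)) : Prop where
  dom : IsDom D
  lin : IsLinMap D A
  deriv : ∀ u ∈ D,
    Tendsto (fun t : ℝ => traceNorm (t⁻¹ • (u - S t u) - A u))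
      (nhdsWithin 0 (Set.Ioi 0)) (nhds 0)
  max : ∀ u, Gsa u → ∀ v, Gsa v →
    Tendsto (fun t : ℝ => traceNorm (t⁻¹ • (u - S t u) - v))
      (nhdsWithin 0 (Set.Ioi 0)) (nhds 0) → u ∈ D

/-- `R = (λ I + A)⁻¹` where `A` has domain `D ⊆ 𝔊₁ˢᵃ`. -/
def IsResolvent (D : Set (H →L[ℂ] H)) (A : (H →L[ℂ] H) → (H →L[ℂ] H)) (lam : ℝ)
    (R : (H →L[ℂ] H) → (H →L[ℂ] H)) : Prop :=
  (∀ u, Gsa u → R u ∈ D ∧ lam • R u + A (R u) = u) ∧ (∀ u ∈ D, R (lam • u + A u) = u)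

/-- The operator `A` with domain `D ⊆ 𝔊₁ˢᵃ` is m-accretive: for every `λ > 0` the
operator `λ I + A` is injective with dense... in fact bijective from `D` onto `𝔊₁ˢᵃ`
and `‖(λ I + A)⁻¹‖ ≤ 1/λ`. -/
def IsMAccretive (D : Set (H →L[ℂ] H)) (A : (H →L[ℂ] H) → (H →L[ℂ] H)) : Prop :=
  ∀ lam : ℝ, 0 < lam →
    (∀ u, Gsa u → ∃ v ∈ D, lam • v + A v = u) ∧
    (∀ v ∈ D, lam * traceNorm v ≤ traceNorm (lam • v + A v))

/-- The operator `A` with domain `D` is quasi-m-accretive: `ω I + A` is m-accretive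
for some `ω ≥ 0`. -/
def IsQuasiMAccretive (D : Set (H →L[ℂ] H)) (A : (H →L[ℂ] H) → (H →L[ℂ] H)) : Prop :=
  ∃ ω : ℝ, 0 ≤ ω ∧ IsMAccretive D (fun u => ω • u + A u)

/-- `(K_α)_{α ∈ J}` is a functional regularisation of the perturbation
`K : D(H) → 𝔊₁ˢᵃ`, where `-Hop` (with domain `D`) generates the unperturbed
semigroup (Definition 1.1). -/
structure IsFunReg (D : Set (H →L[ℂ] H)) (Hop K : (H →L[ℂ] H) → (H →L[ℂ] H))
    {J : Type*} [Preorder J] (Kf : J → (H →L[ℂ] H) → (H →L[ℂ] H)) : Prop where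
  lin : ∀ α, IsLinMap D (Kf α)
  pos : ∀ α, PosPres D (Kf α)
  bound : ∀ α, ∃ a b : ℝ, 0 ≤ a ∧ 0 ≤ b ∧ b < 1 ∧
    ∀ u ∈ D, PosOp u → Trace (Kf α u) ≤ a * Trace u + b * Trace (Hop u)
  mono : ∀ α β : J, α ≤ β → ∀ u ∈ D, PosOp u →
    PosOp (Kf β u - Kf α u) ∧ PosOp (K u - Kf β u)
  conv : ∀ u ∈ D, PosOp u → ∃ V : Submodule ℂ H, Dense (V : Set H) ∧
    ∀ x ∈ V, Tendsto (fun α => (inner ℂ x ((Kf α u) x) : ℂ)) atTop (nhds (inner ℂ x ((K u) x)))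

/-- `D'` is a core for the operator `A` with domain `D`:  `D' ⊆ D` is dense in `D`
for the graph norm. -/
def IsCore (D : Set (H →L[ℂ] H)) (A : (H →L[ℂ] H) → (H →L[ℂ] H))
    (D' : Set (H →L[ℂ] H)) : Prop :=
  D' ⊆ D ∧ ∀ u ∈ D, ∀ ε : ℝ, 0 < ε → ∃ v ∈ D',
    traceNorm (u - v) + traceNorm (A u - A v) < ε
/-! ### Section A : basic lemmas -/

theorem rankOne_apply (x y z : H) : rankOne x y z = (inner ℂ y z : ℂ) • x := rfl

theorem norm_rankOne_le (x y : H) : ‖rankOne x y‖ ≤ ‖x‖ * ‖y‖ := by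
  refine ContinuousLinearMap.opNorm_le_bound _ (by positivity) fun z => ?_
  rw [rankOne_apply, norm_smul]
  calc ‖(inner ℂ y z : ℂ)‖ * ‖x‖ ≤ ‖y‖ * ‖z‖ * ‖x‖ :=
        mul_le_mul_of_nonneg_right (norm_inner_le_norm y z) (norm_nonneg x)
    _ = ‖x‖ * ‖y‖ * ‖z‖ := by ring

/-- The defining set for `traceNorm`. -/
def tnSet (u : H →L[ℂ] H) : Set ℝ :=
  { s : ℝ | ∃ (c : ℕ → ℝ) (e f : ℕ → H), (∀ n, 0 ≤ c n) ∧ (∀ n, ‖e n‖ ≤ 1) ∧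
    (∀ n, ‖f n‖ ≤ 1) ∧ HasSum c s ∧ HasSum (fun n => c n • rankOne (e n) (f n)) u }

theorem traceNorm_eq (u : H →L[ℂ] H) : traceNorm u = sInf (tnSet u) := rfl

theorem tnSet_nonneg {u : H →L[ℂ] H} {s : ℝ} (hs : s ∈ tnSet u) : 0 ≤ s := by
  obtain ⟨c, e, f, hc, -, -, hsum, -⟩ := hs
  exact hsum.tsum_eq ▸ tsum_nonneg hc

theorem tnSet_bddBelow (u : H →L[ℂ] H) : BddBelow (tnSet u) :=
  ⟨0, fun s hs => tnSet_nonneg hs⟩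

theorem tnSet_nonempty {u : H →L[ℂ] H} (hu : IsTraceClass u) : (tnSet u).Nonempty := by
  obtain ⟨c, e, f, hc, he, hf, hsc, hsum⟩ := hu
  exact ⟨∑' n, c n, c, e, f, hc, he, hf, hsc.hasSum, hsum⟩

theorem traceNorm_nonneg (u : H →L[ℂ] H) : 0 ≤ traceNorm u :=
  Real.sInf_nonneg fun _ hs => tnSet_nonneg hs

theorem traceNorm_le_of_mem {u : H →L[ℂ] H} {s : ℝ} (hs : s ∈ tnSet u) : traceNorm u ≤ s :=
  csInf_le (tnSet_bddBelow u) hs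

theorem exists_rep_lt {u : H →L[ℂ] H} (hu : IsTraceClass u) {η : ℝ} (hη : 0 < η) :
    ∃ s ∈ tnSet u, s < traceNorm u + η := by
  have h : sInf (tnSet u) < traceNorm u + η := by
    rw [← traceNorm_eq]; exact lt_add_of_pos_right _ hη
  obtain ⟨s, hs, hlt⟩ := (csInf_lt_iff (tnSet_bddBelow u) (tnSet_nonempty hu)).mp h
  exact ⟨s, hs, hlt⟩

theorem mem_isTraceClass {u : H →L[ℂ] H} {s : ℝ} (hs : s ∈ tnSet u) : IsTraceClass u := by
  obtain ⟨c, e, f, hc, he, hf, hsc, hsum⟩ := hs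
  exact ⟨c, e, f, hc, he, hf, hsc.summable, hsum⟩

theorem norm_term_le {c : ℕ → ℝ} {e f : ℕ → H} (hc : ∀ n, 0 ≤ c n) (he : ∀ n, ‖e n‖ ≤ 1)
    (hf : ∀ n, ‖f n‖ ≤ 1) (n : ℕ) : ‖c n • rankOne (e n) (f n)‖ ≤ c n := by
  rw [norm_smul, Real.norm_eq_abs, abs_of_nonneg (hc n)]
  calc c n * ‖rankOne (e n) (f n)‖ ≤ c n * (‖e n‖ * ‖f n‖) :=
        mul_le_mul_of_nonneg_left (norm_rankOne_le _ _) (hc n)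
    _ ≤ c n * (1 * 1) := by
        exact mul_le_mul_of_nonneg_left (mul_le_mul (he n) (hf n) (norm_nonneg _) zero_le_one) (hc n)
    _ = c n := by ring

theorem opNorm_le_traceNorm {u : H →L[ℂ] H} (hu : IsTraceClass u) : ‖u‖ ≤ traceNorm u := by
  refine le_csInf (tnSet_nonempty hu) fun s hs => ?_
  obtain ⟨c, e, f, hc, he, hf, hsc, hsum⟩ := hs
  have hn : ∀ n, ‖c n • rankOne (e n) (f n)‖ ≤ c n := norm_term_le hc he hf
  calc ‖u‖ ≤ ∑' n, ‖c n • rankOne (e n) (f n)‖ := hsum.tsum_eq ▸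
        norm_tsum_le_tsum_norm (hsc.summable.of_nonneg_of_le (fun n => norm_nonneg _) hn)
    _ ≤ ∑' n, c n := Summable.tsum_le_tsum hn
        (hsc.summable.of_nonneg_of_le (fun n => norm_nonneg _) hn) hsc.summable
    _ = s := hsc.tsum_eq

theorem norm_inner_le_traceNorm {u : H →L[ℂ] H} (hu : IsTraceClass u) (x : H) :
    ‖(inner ℂ x (u x) : ℂ)‖ ≤ traceNorm u * (‖x‖ * ‖x‖) := by
  calc ‖(inner ℂ x (u x) : ℂ)‖ ≤ ‖x‖ * ‖u x‖ := norm_inner_le_norm _ _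
    _ ≤ ‖x‖ * (‖u‖ * ‖x‖) := by
        exact mul_le_mul_of_nonneg_left (u.le_opNorm x) (norm_nonneg x)
    _ ≤ ‖x‖ * (traceNorm u * ‖x‖) := by
        have h1 : ‖u‖ * ‖x‖ ≤ traceNorm u * ‖x‖ :=
          mul_le_mul_of_nonneg_right (opNorm_le_traceNorm hu) (norm_nonneg x)
        exact mul_le_mul_of_nonneg_left h1 (norm_nonneg x)
    _ = traceNorm u * (‖x‖ * ‖x‖) := by ring


/-! ### Section B : series lemma and closure properties -/

theorem norm_smul_rankOne_le {a : ℝ} {x y : H} (ha : 0 ≤ a) (hx : ‖x‖ ≤ 1) (hy : ‖y‖ ≤ 1) :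
    ‖a • rankOne x y‖ ≤ a := by
  rw [norm_smul, Real.norm_eq_abs, abs_of_nonneg ha]
  calc a * ‖rankOne x y‖ ≤ a * (‖x‖ * ‖y‖) :=
        mul_le_mul_of_nonneg_left (norm_rankOne_le _ _) ha
    _ ≤ a * (1 * 1) := mul_le_mul_of_nonneg_left
        (mul_le_mul hx hy (norm_nonneg _) zero_le_one) ha
    _ = a := by ring

/-- Master lemma: an absolutely trace-norm convergent series of trace class operators
converges (in operator norm) to a trace class operator, with trace norm bound. -/
theorem series_traceClass {d : ℕ → H →L[ℂ] H} {σ : ℕ → ℝ}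
    (hrep : ∀ n, σ n ∈ tnSet (d n)) (hσ : Summable σ) :
    ∃ v : H →L[ℂ] H, HasSum d v ∧ IsTraceClass v ∧ traceNorm v ≤ ∑' n, σ n := by
  choose c e f hc he hf hsc hsum using hrep
  set C : ℕ × ℕ → ℝ := fun p => c p.1 p.2 with hC
  have hCnn : ∀ p, 0 ≤ C p := fun p => hc p.1 p.2
  have hCsum : Summable C := by
    refine (summable_prod_of_nonneg (fun p => hCnn p)).mpr ⟨fun n => (hsc n).summable, ?_⟩
    have : (fun n => ∑' k, C (n, k)) = σ := by
      funext n; exact (hsc n).tsum_eq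
    rw [this]; exact hσ
  set F : ℕ × ℕ → H →L[ℂ] H := fun p => C p • rankOne (e p.1 p.2) (f p.1 p.2) with hF
  have hFnorm : ∀ p, ‖F p‖ ≤ C p := fun p =>
    norm_smul_rankOne_le (hCnn p) (he p.1 p.2) (hf p.1 p.2)
  have hFsum : Summable F := Summable.of_norm_bounded hCsum hFnorm
  have hFhas : HasSum F (∑' p, F p) := hFsum.hasSum
  have hdv : HasSum d (∑' p, F p) := hFhas.prod_fiberwise (fun n => hsum n)
  have hCσ : HasSum σ (∑' p, C p) := hCsum.hasSum.prod_fiberwise (fun n => hsc n)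
  have hsum_eq : ∑' p, C p = ∑' n, σ n := hCσ.tsum_eq.symm
  refine ⟨∑' p, F p, hdv, ?_, ?_⟩
  all_goals {
    have κ := (Denumerable.eqv (ℕ × ℕ)).symm
    have hmem : (∑' n, σ n) ∈ tnSet (∑' p, F p) := by
      refine ⟨C ∘ κ, (fun n => e (κ n).1 (κ n).2), (fun n => f (κ n).1 (κ n).2),
        fun n => hCnn _, fun n => he _ _, fun n => hf _ _, ?_, ?_⟩
      · rw [← hsum_eq]; exact κ.hasSum_iff.mpr hCsum.hasSum
      · exact κ.hasSum_iff.mpr hFhas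
    first
    | exact mem_isTraceClass hmem
    | exact traceNorm_le_of_mem hmem }

theorem zero_mem_tnSet : (0 : ℝ) ∈ tnSet (0 : H →L[ℂ] H) := by
  refine ⟨fun _ => 0, fun _ => 0, fun _ => 0, fun _ => le_refl _,
    fun _ => by simp, fun _ => by simp, hasSum_zero, ?_⟩
  simpa using (hasSum_zero : HasSum (fun _ : ℕ => (0 : H →L[ℂ] H)) 0)

theorem isTraceClass_zero : IsTraceClass (0 : H →L[ℂ] H) := mem_isTraceClass zero_mem_tnSet

theorem traceNorm_zero : traceNorm (0 : H →L[ℂ] H) = 0 :=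
  le_antisymm (traceNorm_le_of_mem zero_mem_tnSet) (traceNorm_nonneg _)

/-- Two-term version of the master lemma. -/
theorem pair_traceClass {u v : H →L[ℂ] H} {s t : ℝ}
    (hs : s ∈ tnSet u) (ht : t ∈ tnSet v) :
    IsTraceClass (u + v) ∧ traceNorm (u + v) ≤ s + t := by
  set d : ℕ → H →L[ℂ] H := fun n => if n = 0 then u else if n = 1 then v else 0 with hd
  set σ : ℕ → ℝ := fun n => if n = 0 then s else if n = 1 then t else 0 with hσdef
  have hrep : ∀ n, σ n ∈ tnSet (d n) := by
    intro n
    by_cases h0 : n = 0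
    · simp [hd, hσdef, h0, hs]
    by_cases h1 : n = 1
    · simp [hd, hσdef, h0, h1, ht]
    · simp [hd, hσdef, h0, h1, zero_mem_tnSet]
  have hvanσ : ∀ n ∉ Finset.range 2, σ n = 0 := by
    intro n hn
    simp only [Finset.mem_range, not_lt] at hn
    have h0 : n ≠ 0 := by omega
    have h1 : n ≠ 1 := by omega
    simp [hσdef, h0, h1]
  have hvand : ∀ n ∉ Finset.range 2, d n = 0 := by
    intro n hn
    simp only [Finset.mem_range, not_lt] at hn
    have h0 : n ≠ 0 := by omega
    have h1 : n ≠ 1 := by omega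
    simp [hd, h0, h1]
  have hσhas : HasSum σ (s + t) := by
    have : HasSum σ (∑ n ∈ Finset.range 2, σ n) := hasSum_sum_of_ne_finset_zero hvanσ
    have heq : ∑ n ∈ Finset.range 2, σ n = s + t := by
      rw [Finset.sum_range_succ, Finset.sum_range_one]; simp [hσdef]
    rwa [heq] at this
  have hdhas : HasSum d (u + v) := by
    have : HasSum d (∑ n ∈ Finset.range 2, d n) := hasSum_sum_of_ne_finset_zero hvand
    have heq : ∑ n ∈ Finset.range 2, d n = u + v := by
      rw [Finset.sum_range_succ, Finset.sum_range_one]; simp [hd]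
    rwa [heq] at this
  obtain ⟨w, hw, hwtc, hwn⟩ := series_traceClass hrep hσhas.summable
  have : w = u + v := hw.unique hdhas
  subst this
  exact ⟨hwtc, le_trans hwn (le_of_eq hσhas.tsum_eq)⟩

theorem IsTraceClass.add {u v : H →L[ℂ] H} (hu : IsTraceClass u) (hv : IsTraceClass v) :
    IsTraceClass (u + v) := by
  obtain ⟨s, hs⟩ := tnSet_nonempty hu
  obtain ⟨t, ht⟩ := tnSet_nonempty hv
  exact (pair_traceClass hs ht).1

theorem traceNorm_add_le {u v : H →L[ℂ] H} (hu : IsTraceClass u) (hv : IsTraceClass v) :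
    traceNorm (u + v) ≤ traceNorm u + traceNorm v := by
  refine le_of_forall_pos_le_add fun η hη => ?_
  obtain ⟨s, hs, hslt⟩ := exists_rep_lt hu (half_pos hη)
  obtain ⟨t, ht, htlt⟩ := exists_rep_lt hv (half_pos hη)
  have := (pair_traceClass hs ht).2
  linarith

theorem rankOne_neg_left (x y : H) : rankOne (-x) y = -rankOne x y := by
  ext z; simp [rankOne_apply]

theorem smul_mem_tnSet {u : H →L[ℂ] H} {s : ℝ} (hs : s ∈ tnSet u) (a : ℝ) :
    (|a| * s) ∈ tnSet (a • u) := by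
  obtain ⟨c, e, f, hc, he, hf, hsc, hsum⟩ := hs
  refine ⟨fun n => |a| * c n, fun n => if 0 ≤ a then e n else -(e n), f,
    fun n => mul_nonneg (abs_nonneg a) (hc n), fun n => ?_, hf, hsc.mul_left _, ?_⟩
  · by_cases h : 0 ≤ a <;> simp [h, he n]
  · have key : ∀ n, (|a| * c n) • rankOne (if 0 ≤ a then e n else -(e n)) (f n)
        = a • (c n • rankOne (e n) (f n)) := by
      intro n
      by_cases h : 0 ≤ a
      · simp only [h, if_true, abs_of_nonneg h, smul_smul]
      · push_neg at h
        simp only [h.not_ge, if_false, abs_of_neg h, rankOne_neg_left, smul_neg, smul_smul]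
        rw [← neg_smul, neg_mul, neg_neg]
    have := hsum.const_smul a
    simpa [key] using this

theorem IsTraceClass.smul {u : H →L[ℂ] H} (hu : IsTraceClass u) (a : ℝ) :
    IsTraceClass (a • u) := by
  obtain ⟨s, hs⟩ := tnSet_nonempty hu
  exact mem_isTraceClass (smul_mem_tnSet hs a)

theorem traceNorm_smul_le {u : H →L[ℂ] H} (hu : IsTraceClass u) (a : ℝ) :
    traceNorm (a • u) ≤ |a| * traceNorm u := by
  refine le_of_forall_pos_le_add fun η hη => ?_
  have hpos : 0 < η / (|a| + 1) := div_pos hη (by positivity)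
  obtain ⟨s, hs, hslt⟩ := exists_rep_lt hu hpos
  have h2 := traceNorm_le_of_mem (smul_mem_tnSet hs a)
  have h3 : |a| * s ≤ |a| * (traceNorm u + η / (|a| + 1)) :=
    mul_le_mul_of_nonneg_left hslt.le (abs_nonneg a)
  have h4 : |a| * (η / (|a| + 1)) ≤ η := by
    rw [mul_div_assoc']
    rw [div_le_iff₀ (by positivity)]
    nlinarith [abs_nonneg a]
  nlinarith [abs_nonneg a]

theorem IsTraceClass.neg {u : H →L[ℂ] H} (hu : IsTraceClass u) : IsTraceClass (-u) := by
  simpa using hu.smul (-1)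

theorem IsTraceClass.sub {u v : H →L[ℂ] H} (hu : IsTraceClass u) (hv : IsTraceClass v) :
    IsTraceClass (u - v) := by
  simpa [sub_eq_add_neg] using hu.add hv.neg

theorem traceNorm_neg (u : H →L[ℂ] H) (hu : IsTraceClass u) :
    traceNorm (-u) ≤ traceNorm u := by
  simpa using traceNorm_smul_le hu (-1)


/-! ### Section C : self-adjointness and the Banach space `TCsa` -/

theorem isSelfAdjoint_inner_im_zero {u : H →L[ℂ] H} (hu : IsSelfAdjoint u) (x : H) :
    (inner ℂ x (u x) : ℂ).im = 0 := by
  have hsym := (ContinuousLinearMap.isSelfAdjoint_iff_isSymmetric.mp hu) x x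
  have : (starRingEnd ℂ) (inner ℂ x (u x) : ℂ) = inner ℂ x (u x) := by
    rw [inner_conj_symm]; exact hsym
  exact Complex.conj_eq_iff_im.mp this

theorem posOp_of_re {u : H →L[ℂ] H} (hu : IsSelfAdjoint u)
    (h : ∀ x : H, 0 ≤ (inner ℂ x (u x) : ℂ).re) : PosOp u := by
  intro x
  rw [Complex.le_def]
  exact ⟨by simpa using h x, by simpa using (isSelfAdjoint_inner_im_zero hu x).symm⟩

theorem PosOp.re_nonneg {u : H →L[ℂ] H} (hu : PosOp u) (x : H) :
    0 ≤ (inner ℂ x (u x) : ℂ).re := by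
  have := (Complex.le_def.mp (hu x)).1; simpa using this

theorem Gsa.zero : Gsa (0 : H →L[ℂ] H) := ⟨isTraceClass_zero, star_zero _⟩

theorem Gsa.add {u v : H →L[ℂ] H} (hu : Gsa u) (hv : Gsa v) : Gsa (u + v) :=
  ⟨hu.1.add hv.1, hu.2.add hv.2⟩

theorem Gsa.smul {u : H →L[ℂ] H} (hu : Gsa u) (a : ℝ) : Gsa (a • u) :=
  ⟨hu.1.smul a, IsSelfAdjoint.smul (star_trivial a) hu.2⟩

theorem Gsa.neg {u : H →L[ℂ] H} (hu : Gsa u) : Gsa (-u) := by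
  simpa using hu.smul (-1)

theorem Gsa.sub {u v : H →L[ℂ] H} (hu : Gsa u) (hv : Gsa v) : Gsa (u - v) := by
  simpa [sub_eq_add_neg] using hu.add hv.neg

variable (H) in
/-- The real vector space of self-adjoint trace class operators. -/
def TCsa := {u : H →L[ℂ] H // Gsa u}

namespace TCsa

instance : Zero (TCsa H) := ⟨⟨0, Gsa.zero⟩⟩
instance : Add (TCsa H) := ⟨fun u v => ⟨u.1 + v.1, u.2.add v.2⟩⟩
instance : SMul ℝ (TCsa H) := ⟨fun a u => ⟨a • u.1, u.2.smul a⟩⟩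
instance : Neg (TCsa H) := ⟨fun u => ⟨-u.1, u.2.neg⟩⟩
instance : Sub (TCsa H) := ⟨fun u v => ⟨u.1 - v.1, u.2.sub v.2⟩⟩
instance : SMul ℕ (TCsa H) := ⟨fun n u => (n : ℝ) • u⟩
instance : SMul ℤ (TCsa H) := ⟨fun n u => (n : ℝ) • u⟩

@[simp] theorem val_zero : (0 : TCsa H).val = 0 := rfl
@[simp] theorem val_add (u v : TCsa H) : (u + v).val = u.val + v.val := rfl
@[simp] theorem val_smul (a : ℝ) (u : TCsa H) : (a • u).val = a • u.val := rfl
@[simp] theorem val_neg (u : TCsa H) : (-u).val = -u.val := rfl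
@[simp] theorem val_sub (u v : TCsa H) : (u - v).val = u.val - v.val := rfl

theorem val_injective : Function.Injective (fun u : TCsa H => u.val) :=
  Subtype.val_injective

instance : AddCommGroup (TCsa H) :=
  Function.Injective.addCommGroup (fun u : TCsa H => u.val) val_injective rfl
    (fun _ _ => rfl) (fun _ => rfl) (fun _ _ => rfl)
    (fun u n => by
      show ((n : ℝ) • u).val = n • u.val
      rw [val_smul, Nat.cast_smul_eq_nsmul])
    (fun u n => by
      show ((n : ℝ) • u).val = n • u.val
      rw [val_smul, Int.cast_smul_eq_zsmul])

/-- `val` as an `AddMonoidHom`. -/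
def valHom : TCsa H →+ (H →L[ℂ] H) where
  toFun := fun u => u.val
  map_zero' := rfl
  map_add' := fun _ _ => rfl

instance : Module ℝ (TCsa H) :=
  Function.Injective.module ℝ (valHom (H := H)) val_injective (fun _ _ => rfl)

instance : NormedAddCommGroup (TCsa H) :=
  AddGroupNorm.toNormedAddCommGroup
    { toFun := fun u => traceNorm u.val
      map_zero' := traceNorm_zero
      add_le' := fun u v => traceNorm_add_le u.2.1 v.2.1
      neg' := fun u => le_antisymm (traceNorm_neg _ u.2.1)
        (by simpa using traceNorm_neg (-u.val) u.2.1.neg)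
      eq_zero_of_map_eq_zero' := fun u hu => by
        apply val_injective
        show u.val = 0
        have h1 : ‖u.val‖ ≤ 0 := hu ▸ opNorm_le_traceNorm u.2.1
        simpa using le_antisymm h1 (norm_nonneg _) }

theorem norm_def (u : TCsa H) : ‖u‖ = traceNorm u.val := rfl

instance : NormedSpace ℝ (TCsa H) :=
  ⟨fun a u => by
    rw [norm_def, norm_def, val_smul, Real.norm_eq_abs]
    exact traceNorm_smul_le u.2.1 a⟩

theorem opNorm_val_le (u : TCsa H) : ‖u.val‖ ≤ ‖u‖ := opNorm_le_traceNorm u.2.1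

instance : CompleteSpace (TCsa H) := by
  apply Metric.complete_of_convergent_controlled_sequences (fun n => (1/2 : ℝ)^n)
    (fun n => by positivity)
  intro w hw
  -- increments
  set d : ℕ → H →L[ℂ] H := fun n => Nat.rec (w 0).val (fun n _ => ((w (n+1)) - (w n)).val) n
    with hd
  have hd0 : d 0 = (w 0).val := rfl
  have hdsucc : ∀ n, d (n + 1) = ((w (n+1)) - (w n)).val := fun n => rfl
  have hdtc : ∀ n, IsTraceClass (d n) := by
    intro n; cases n with
    | zero => exact (w 0).2.1
    | succ n => exact ((w (n+1)) - (w n)).2.1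
  have hdnorm : ∀ n, traceNorm (d (n + 1)) < (1/2 : ℝ)^n := by
    intro n
    have := hw n (n+1) n (by omega) (by omega)
    rw [dist_eq_norm] at this
    exact this
  -- choose representations
  obtain ⟨σ0, hσ0⟩ := tnSet_nonempty (hdtc 0)
  have hex : ∀ n, ∃ s ∈ tnSet (d (n+1)), s ≤ (1/2 : ℝ)^n := by
    intro n
    obtain ⟨s, hs, hlt⟩ := exists_rep_lt (hdtc (n+1)) (sub_pos.mpr (hdnorm n))
    exact ⟨s, hs, by linarith⟩
  choose σs hσsmem hσsle using hex
  set σ : ℕ → ℝ := fun n => Nat.rec σ0 (fun n _ => σs n) n with hσ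
  have hσ0' : σ 0 = σ0 := rfl
  have hσsucc : ∀ n, σ (n + 1) = σs n := fun n => rfl
  have hmem : ∀ n, σ n ∈ tnSet (d n) := by
    intro n; cases n with
    | zero => exact hσ0
    | succ n => exact hσsmem n
  have hgeo : Summable (fun n : ℕ => (1/2 : ℝ)^n) :=
    summable_geometric_of_lt_one (by norm_num) (by norm_num)
  have hσsum : Summable σ := by
    rw [← summable_nat_add_iff 1]
    refine Summable.of_nonneg_of_le (fun n => tnSet_nonneg (hσsmem n)) ?_ hgeo
    intro n; rw [hσsucc]; exact hσsle n
  obtain ⟨v, hvsum, hvtc, -⟩ := series_traceClass hmem hσsum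
  have key : ∀ n, ∑ i ∈ Finset.range (n+1), d i = (w n).val := by
    intro n
    induction n with
    | zero => simp [hd0]
    | succ n ih =>
      rw [Finset.sum_range_succ, ih, hdsucc]
      simp
  have hlim : Tendsto (fun n => (w n).val) atTop (𝓝 v) := by
    have h1 := hvsum.tendsto_sum_nat
    have h2 : Tendsto (fun n => ∑ i ∈ Finset.range (n+1), d i) atTop (𝓝 v) :=
      h1.comp (tendsto_add_atTop_nat 1)
    simpa only [key] using h2
  have hsa : IsSelfAdjoint v := by
    show star v = v
    have h1 : Tendsto (fun n => star (w n).val) atTop (𝓝 (star v)) :=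
      (continuous_star.tendsto v).comp hlim
    have h2 : (fun n => star (w n).val) = fun n => (w n).val := by
      funext n; exact (w n).2.2
    rw [h2] at h1
    exact tendsto_nhds_unique h1 hlim
  set vE : TCsa H := ⟨v, ⟨hvtc, hsa⟩⟩ with hvE
  refine ⟨vE, ?_⟩
  rw [tendsto_iff_norm_sub_tendsto_zero]
  have hbound : ∀ n, ‖w n - vE‖ ≤ 2 * (1/2 : ℝ)^n := by
    intro n
    obtain ⟨v', hv'sum, hv'tc, hv'n⟩ := series_traceClass
      (fun k => hmem (k + (n+1))) ((summable_nat_add_iff (n+1)).mpr hσsum)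
    have htail : HasSum (fun k => d (k + (n+1))) (v - (w n).val) := by
      rw [hasSum_nat_add_iff (n+1)]
      rw [key n, sub_add_cancel]
      exact hvsum
    have hveq : v' = v - (w n).val := hv'sum.unique htail
    have hb1 : ∑' k, σ (k + (n+1)) ≤ 2 * (1/2 : ℝ)^n := by
      have hle : ∀ k, σ (k + (n+1)) ≤ (1/2 : ℝ)^n * (1/2 : ℝ)^k := by
        intro k
        have : k + (n + 1) = (k + n) + 1 := by omega
        rw [this, hσsucc]
        calc σs (k + n) ≤ (1/2 : ℝ)^(k+n) := hσsle (k+n)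
          _ = (1/2 : ℝ)^n * (1/2 : ℝ)^k := by rw [pow_add]; ring
      calc ∑' k, σ (k + (n+1)) ≤ ∑' k, (1/2 : ℝ)^n * (1/2 : ℝ)^k :=
            Summable.tsum_le_tsum hle ((summable_nat_add_iff (n+1)).mpr hσsum) (hgeo.mul_left _)
        _ = (1/2 : ℝ)^n * ∑' k, (1/2 : ℝ)^k := tsum_mul_left
        _ = (1/2 : ℝ)^n * 2 := by
            rw [tsum_geometric_of_lt_one (by norm_num) (by norm_num)]; norm_num
        _ = 2 * (1/2 : ℝ)^n := by ring
    have : ‖w n - vE‖ = traceNorm ((w n).val - v) := rfl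
    rw [this]
    have h5 : (w n).val - v = -v' := by rw [hveq]; abel
    rw [h5]
    calc traceNorm (-v') ≤ traceNorm v' := traceNorm_neg _ hv'tc
      _ ≤ ∑' k, σ (k + (n+1)) := hv'n
      _ ≤ 2 * (1/2 : ℝ)^n := hb1
  have hz : Tendsto (fun n : ℕ => 2 * (1/2 : ℝ)^n) atTop (𝓝 0) := by
    have := tendsto_pow_atTop_nhds_zero_of_lt_one (show (0:ℝ) ≤ 1/2 by norm_num)
      (show (1/2 : ℝ) < 1 by norm_num)
    simpa using this.const_mul 2
  exact squeeze_zero (fun n => norm_nonneg _) hbound hz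

end TCsa


/-! ### Section D : semigroups on `TCsa` -/

section SG

variable {S : ℝ → (H →L[ℂ] H) → (H →L[ℂ] H)}

open TCsa

/-- The semigroup map at time `t > 0`, as a continuous linear map on `TCsa`. -/
def sgCLM (hS : IsC0Semigroup S) (hSb : IsBoundedSG S) (t : ℝ) (ht : 0 < t) :
    TCsa H →L[ℝ] TCsa H :=
  LinearMap.mkContinuous
    { toFun := fun u => ⟨S t u.val, (hS.lin t ht).maps u.val u.2⟩
      map_add' := fun u v => val_injective (by
        show S t (u.val + v.val) = S t u.val + S t v.val
        exact (hS.lin t ht).map_add u.val u.2 v.val v.2)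
      map_smul' := fun a u => val_injective (by
        show S t (a • u.val) = a • S t u.val
        exact (hS.lin t ht).map_smul a u.val u.2) }
    hSb.choose
    (fun u => hSb.choose_spec t ht u.val u.2)

theorem sgCLM_val (hS : IsC0Semigroup S) (hSb : IsBoundedSG S) {t : ℝ} (ht : 0 < t)
    (u : TCsa H) : (sgCLM hS hSb t ht u).val = S t u.val := rfl

/-- Uniform bound constant, at least `1`. -/
def M₀ (hSb : IsBoundedSG S) : ℝ := max hSb.choose 1

theorem M₀_pos (hSb : IsBoundedSG S) : 0 < M₀ hSb :=
  lt_of_lt_of_le one_pos (le_max_right _ _)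

theorem one_le_M₀ (hSb : IsBoundedSG S) : 1 ≤ M₀ hSb := le_max_right _ _

theorem sgCLM_bound (hS : IsC0Semigroup S) (hSb : IsBoundedSG S) {t : ℝ} (ht : 0 < t)
    (u : TCsa H) : ‖sgCLM hS hSb t ht u‖ ≤ M₀ hSb * ‖u‖ := by
  have h1 : ‖sgCLM hS hSb t ht u‖ ≤ hSb.choose * ‖u‖ :=
    hSb.choose_spec t ht u.val u.2
  have : hSb.choose * ‖u‖ ≤ M₀ hSb * ‖u‖ :=
    mul_le_mul_of_nonneg_right (le_max_left _ _) (norm_nonneg _)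
  linarith

/-- The semigroup as a total function `ℝ → TCsa H → TCsa H` (identity for `t ≤ 0`). -/
def sg (hS : IsC0Semigroup S) (hSb : IsBoundedSG S) : ℝ → TCsa H → TCsa H :=
  fun t u => if ht : 0 < t then sgCLM hS hSb t ht u else u

variable (hS : IsC0Semigroup S) (hSb : IsBoundedSG S)

theorem sg_of_pos {t : ℝ} (ht : 0 < t) (u : TCsa H) :
    sg hS hSb t u = sgCLM hS hSb t ht u := dif_pos ht

theorem sg_of_nonpos {t : ℝ} (ht : ¬ 0 < t) (u : TCsa H) : sg hS hSb t u = u := dif_neg ht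

theorem sg_val {t : ℝ} (ht : 0 < t) (u : TCsa H) :
    (sg hS hSb t u).val = S t u.val := by rw [sg_of_pos hS hSb ht]; rfl

theorem sg_bound {t : ℝ} (ht : 0 < t) (u : TCsa H) :
    ‖sg hS hSb t u‖ ≤ M₀ hSb * ‖u‖ := by
  rw [sg_of_pos hS hSb ht]; exact sgCLM_bound hS hSb ht u

theorem sg_comp {s t : ℝ} (hs : 0 < s) (ht : 0 < t) (u : TCsa H) :
    sg hS hSb (s + t) u = sg hS hSb s (sg hS hSb t u) := by
  apply val_injective
  have h1 : (sg hS hSb (s + t) u).val = S (s + t) u.val := sg_val hS hSb (by linarith) u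
  have h2 : (sg hS hSb s (sg hS hSb t u)).val = S s (S t u.val) := by
    rw [sg_val hS hSb hs, sg_val hS hSb ht]
  show (sg hS hSb (s + t) u).val = (sg hS hSb s (sg hS hSb t u)).val
  rw [h1, h2]
  exact hS.comp s t hs ht u.val u.2

theorem sg_sub {t : ℝ} (ht : 0 < t) (u v : TCsa H) :
    sg hS hSb t (u - v) = sg hS hSb t u - sg hS hSb t v := by
  rw [sg_of_pos hS hSb ht, sg_of_pos hS hSb ht, sg_of_pos hS hSb ht]
  exact map_sub _ u v

theorem sg_smul {t : ℝ} (ht : 0 < t) (a : ℝ) (u : TCsa H) :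
    sg hS hSb t (a • u) = a • sg hS hSb t u := by
  rw [sg_of_pos hS hSb ht, sg_of_pos hS hSb ht]
  exact map_smul _ a u

/-- Strong continuity, `t → 0⁺`. -/
theorem sg_strong (u : TCsa H) :
    Tendsto (fun t => sg hS hSb t u) (𝓝[>] (0:ℝ)) (𝓝 u) := by
  rw [tendsto_iff_norm_sub_tendsto_zero]
  have hcong : (fun t => traceNorm (S t u.val - u.val)) =ᶠ[𝓝[>] (0:ℝ)]
      (fun t => ‖sg hS hSb t u - u‖) := by
    filter_upwards [self_mem_nhdsWithin] with t ht
    have : (sg hS hSb t u - u).val = S t u.val - u.val := by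
      rw [val_sub, sg_val hS hSb ht]
    rw [norm_def, this]
  exact (hS.strong u.val u.2).congr' hcong

theorem sg_strong_norm (u : TCsa H) :
    Tendsto (fun t => ‖sg hS hSb t u - u‖) (𝓝[>] (0:ℝ)) (𝓝 0) := by
  have := sg_strong hS hSb u
  rwa [tendsto_iff_norm_sub_tendsto_zero] at this

/-- Strong continuity from the right at `0`, within `Ici 0`. -/
theorem sg_strong_Ici (u : TCsa H) :
    Tendsto (fun t => sg hS hSb t u) (𝓝[Set.Ici (0:ℝ)] 0) (𝓝 u) := by
  have h0 : Set.Ici (0:ℝ) = insert 0 (Set.Ioi 0) := Set.Ioi_insert.symm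
  rw [h0, nhdsWithin_insert]
  rw [tendsto_sup]
  constructor
  · have : sg hS hSb 0 u = u := sg_of_nonpos hS hSb (lt_irrefl 0) u
    simpa [this] using (tendsto_pure_nhds (fun t => sg hS hSb t u) 0)
  · exact sg_strong hS hSb u

theorem tendsto_sub_gt (s₀ : ℝ) :
    Tendsto (fun s => s - s₀) (𝓝[>] s₀) (𝓝[>] (0:ℝ)) := by
  rw [tendsto_nhdsWithin_iff]
  constructor
  · have : Tendsto (fun s => s - s₀) (𝓝 s₀) (𝓝 (s₀ - s₀)) :=
      (continuous_id.sub continuous_const).tendsto s₀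
    rw [sub_self] at this
    exact this.mono_left nhdsWithin_le_nhds
  · filter_upwards [self_mem_nhdsWithin] with s hs
    exact sub_pos.mpr (Set.mem_Ioi.mp hs)

theorem tendsto_rsub_lt (s₀ : ℝ) :
    Tendsto (fun s => s₀ - s) (𝓝[<] s₀) (𝓝[>] (0:ℝ)) := by
  rw [tendsto_nhdsWithin_iff]
  constructor
  · have : Tendsto (fun s => s₀ - s) (𝓝 s₀) (𝓝 (s₀ - s₀)) :=
      (continuous_const.sub continuous_id).tendsto s₀
    rw [sub_self] at this
    exact this.mono_left nhdsWithin_le_nhds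
  · filter_upwards [self_mem_nhdsWithin] with s hs
    exact sub_pos.mpr (Set.mem_Iio.mp hs)

/-- Continuity of `s ↦ S_s u` at any `s₀ > 0`. -/
theorem sg_cont {s₀ : ℝ} (hs₀ : 0 < s₀) (u : TCsa H) :
    Tendsto (fun s => sg hS hSb s u) (𝓝 s₀) (𝓝 (sg hS hSb s₀ u)) := by
  rw [← nhdsLT_sup_nhdsGE s₀, tendsto_sup]
  constructor
  · -- left: s < s₀
    rw [tendsto_iff_norm_sub_tendsto_zero]
    have hbnd : ∀ᶠ s in 𝓝[<] s₀, ‖sg hS hSb s u - sg hS hSb s₀ u‖ ≤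
        M₀ hSb * ‖sg hS hSb (s₀ - s) u - u‖ := by
      have hIoo : Set.Ioo 0 s₀ ∈ 𝓝[<] s₀ :=
        Ioo_mem_nhdsLT_of_mem ⟨hs₀, le_refl s₀⟩
      filter_upwards [hIoo] with s hs
      obtain ⟨hs1, hs2⟩ := Set.mem_Ioo.mp hs
      have h1 : sg hS hSb s₀ u = sg hS hSb s (sg hS hSb (s₀ - s) u) := by
        rw [← sg_comp hS hSb hs1 (by linarith : (0:ℝ) < s₀ - s)]
        congr 1; ring
      have h2 : sg hS hSb s u - sg hS hSb s₀ u
          = sg hS hSb s (u - sg hS hSb (s₀ - s) u) := by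
        rw [h1, ← sg_sub hS hSb hs1]
      rw [h2]
      calc ‖sg hS hSb s (u - sg hS hSb (s₀ - s) u)‖
          ≤ M₀ hSb * ‖u - sg hS hSb (s₀ - s) u‖ := sg_bound hS hSb hs1 _
        _ = M₀ hSb * ‖sg hS hSb (s₀ - s) u - u‖ := by rw [norm_sub_rev]
    have hlim : Tendsto (fun s => M₀ hSb * ‖sg hS hSb (s₀ - s) u - u‖) (𝓝[<] s₀) (𝓝 0) := by
      have := (sg_strong_norm hS hSb u).comp (tendsto_rsub_lt s₀)
      simpa using this.const_mul (M₀ hSb)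
    exact squeeze_zero_norm' (by filter_upwards [hbnd] with s h using by simpa using h) hlim
  · -- right: s ≥ s₀
    rw [tendsto_iff_norm_sub_tendsto_zero]
    have hbnd : ∀ᶠ s in 𝓝[≥] s₀, ‖sg hS hSb s u - sg hS hSb s₀ u‖ ≤
        M₀ hSb * ‖sg hS hSb (s - s₀) u - u‖ := by
      filter_upwards [self_mem_nhdsWithin] with s hs
      rcases eq_or_lt_of_le (Set.mem_Ici.mp hs) with heq | hlt
      · subst heq
        have : sg hS hSb (s₀ - s₀) u = u := by
          rw [sub_self]; exact sg_of_nonpos hS hSb (lt_irrefl 0) u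
        simp [this]
        exact mul_nonneg (M₀_pos hSb).le (norm_nonneg _)
      · have h1 : sg hS hSb s u = sg hS hSb s₀ (sg hS hSb (s - s₀) u) := by
          rw [← sg_comp hS hSb hs₀ (by linarith : (0:ℝ) < s - s₀)]
          congr 1; ring
        have h2 : sg hS hSb s u - sg hS hSb s₀ u
            = sg hS hSb s₀ (sg hS hSb (s - s₀) u - u) := by
          rw [h1, ← sg_sub hS hSb hs₀]
        rw [h2]
        exact sg_bound hS hSb hs₀ _
    have hshift : Tendsto (fun s => s - s₀) (𝓝[≥] s₀) (𝓝[Set.Ici (0:ℝ)] 0) := by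
      rw [tendsto_nhdsWithin_iff]
      constructor
      · have : Tendsto (fun s => s - s₀) (𝓝 s₀) (𝓝 (s₀ - s₀)) :=
          (continuous_id.sub continuous_const).tendsto s₀
        rw [sub_self] at this
        exact this.mono_left nhdsWithin_le_nhds
      · filter_upwards [self_mem_nhdsWithin] with s hs
        exact sub_nonneg.mpr (Set.mem_Ici.mp hs)
    have hlim : Tendsto (fun s => M₀ hSb * ‖sg hS hSb (s - s₀) u - u‖) (𝓝[≥] s₀) (𝓝 0) := by
      have h3 : Tendsto (fun t => ‖sg hS hSb t u - u‖) (𝓝[Set.Ici (0:ℝ)] 0) (𝓝 0) := by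
        have := sg_strong_Ici hS hSb u
        rwa [tendsto_iff_norm_sub_tendsto_zero] at this
      have := h3.comp hshift
      simpa using this.const_mul (M₀ hSb)
    exact squeeze_zero_norm' (by filter_upwards [hbnd] with s h using by simpa using h) hlim

end SG


/-! ### Section E : generator lemmas -/

section Gen

variable {S : ℝ → (H →L[ℂ] H) → (H →L[ℂ] H)} {DH : Set (H →L[ℂ] H)}
  {Hop : (H →L[ℂ] H) → (H →L[ℂ] H)}

open TCsa

/-- The generator applied to an element of the domain, as an element of `TCsa`. -/
def HE (hgen : GeneratesNeg S DH Hop) {u : TCsa H} (hu : u.val ∈ DH) : TCsa H :=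
  ⟨Hop u.val, hgen.lin.maps u.val hu⟩

theorem HE_val (hgen : GeneratesNeg S DH Hop) {u : TCsa H} (hu : u.val ∈ DH) :
    (HE hgen hu).val = Hop u.val := rfl

variable (hS : IsC0Semigroup S) (hSb : IsBoundedSG S) (hgen : GeneratesNeg S DH Hop)

include hgen

/-- Derivative at `0⁺` for elements of the domain, in `TCsa`. -/
theorem gen_deriv {u : TCsa H} (hu : u.val ∈ DH) :
    Tendsto (fun t : ℝ => t⁻¹ • (u - sg hS hSb t u)) (𝓝[>] (0:ℝ)) (𝓝 (HE hgen hu)) := by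
  rw [tendsto_iff_norm_sub_tendsto_zero]
  refine (hgen.deriv u.val hu).congr' ?_
  filter_upwards [self_mem_nhdsWithin] with t ht
  have hval : (t⁻¹ • (u - sg hS hSb t u) - HE hgen hu).val
      = t⁻¹ • (u.val - S t u.val) - Hop u.val := by
    rw [val_sub, val_smul, val_sub, sg_val hS hSb ht, HE_val]
  rw [norm_def, hval]

/-- Maximality: if the difference quotients converge in `TCsa`, the point is in the
domain and the limit is the generator value. -/
theorem gen_max {u v : TCsa H}
    (hconv : Tendsto (fun t : ℝ => t⁻¹ • (u - sg hS hSb t u)) (𝓝[>] (0:ℝ)) (𝓝 v)) :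
    ∃ hu : u.val ∈ DH, Hop u.val = v.val := by
  have hnorm : Tendsto (fun t : ℝ => traceNorm (t⁻¹ • (u.val - S t u.val) - v.val))
      (𝓝[>] (0:ℝ)) (𝓝 0) := by
    rw [tendsto_iff_norm_sub_tendsto_zero] at hconv
    refine hconv.congr' ?_
    filter_upwards [self_mem_nhdsWithin] with t ht
    have hval : (t⁻¹ • (u - sg hS hSb t u) - v).val
        = t⁻¹ • (u.val - S t u.val) - v.val := by
      rw [val_sub, val_smul, val_sub, sg_val hS hSb ht]
    rw [norm_def, hval]
  have hu : u.val ∈ DH := hgen.max u.val u.2 v.val v.2 hnorm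
  refine ⟨hu, ?_⟩
  have h1 := gen_deriv hS hSb hgen hu
  have : HE hgen hu = v := tendsto_nhds_unique h1 hconv
  rw [← this, HE_val]

/-- Invariance of the domain under the semigroup, and commutation with the generator. -/
theorem gen_invariance {u : TCsa H} (hu : u.val ∈ DH) {s : ℝ} (hs : 0 < s) :
    ∃ hmem : (sg hS hSb s u).val ∈ DH,
      Hop (sg hS hSb s u).val = (sg hS hSb s (HE hgen hu)).val := by
  apply gen_max hS hSb hgen
  have hEq : (fun t : ℝ => t⁻¹ • (sg hS hSb s u - sg hS hSb t (sg hS hSb s u)))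
      =ᶠ[𝓝[>] (0:ℝ)] (fun t => sgCLM hS hSb s hs (t⁻¹ • (u - sg hS hSb t u))) := by
    filter_upwards [self_mem_nhdsWithin] with t ht
    have hcomm : sg hS hSb t (sg hS hSb s u) = sg hS hSb s (sg hS hSb t u) := by
      rw [← sg_comp hS hSb ht hs, ← sg_comp hS hSb hs ht]
      congr 1; ring
    rw [hcomm]
    rw [← sg_sub hS hSb hs, ← sg_smul hS hSb hs, sg_of_pos hS hSb hs]
  rw [tendsto_congr' hEq]
  have := ((sgCLM hS hSb s hs).continuous.tendsto (HE hgen hu)).comp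
    (gen_deriv hS hSb hgen hu)
  rw [sg_of_pos hS hSb hs]
  exact this

end Gen


/-! ### Section F : quadratic form and mollifiers -/

open TCsa

/-- The quadratic form `u ↦ Re ⟪x, u x⟫` as a continuous linear functional on `TCsa`. -/
def qf (x : H) : TCsa H →L[ℝ] ℝ :=
  LinearMap.mkContinuous
    { toFun := fun u => (inner ℂ x (u.val x) : ℂ).re
      map_add' := fun u v => by
        show (inner ℂ x ((u.val + v.val) x) : ℂ).re = _
        rw [ContinuousLinearMap.add_apply, inner_add_right, Complex.add_re]
      map_smul' := fun a u => by
        show (inner ℂ x ((a • u.val) x) : ℂ).re = a * (inner ℂ x (u.val x) : ℂ).re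
        rw [ContinuousLinearMap.smul_apply]
        have : a • (u.val x) = (a : ℂ) • (u.val x) := by
          simp [Complex.coe_smul]
        rw [this, inner_smul_right, Complex.re_ofReal_mul] }
    (‖x‖ * ‖x‖)
    (fun u => by
      show |(inner ℂ x (u.val x) : ℂ).re| ≤ ‖x‖ * ‖x‖ * ‖u‖
      calc |(inner ℂ x (u.val x) : ℂ).re| ≤ ‖(inner ℂ x (u.val x) : ℂ)‖ :=
            Complex.abs_re_le_norm _
        _ ≤ traceNorm u.val * (‖x‖ * ‖x‖) := norm_inner_le_traceNorm u.2.1 x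
        _ = ‖x‖ * ‖x‖ * ‖u‖ := by rw [norm_def]; ring)

theorem qf_apply (x : H) (u : TCsa H) : qf x u = (inner ℂ x (u.val x) : ℂ).re := rfl

theorem qf_nonneg_of_posOp (x : H) {u : TCsa H} (h : PosOp u.val) : 0 ≤ qf x u :=
  h.re_nonneg x

theorem posOp_val_of_qf {u : TCsa H} (h : ∀ x : H, 0 ≤ qf x u) : PosOp u.val :=
  posOp_of_re u.2.2 h

theorem posOp_smul {u : H →L[ℂ] H} (h : PosOp u) {c : ℝ} (hc : 0 ≤ c) :
    PosOp (c • u) := by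
  intro x
  have : (inner ℂ x ((c • u) x) : ℂ) = (c : ℂ) * inner ℂ x (u x) := by
    rw [ContinuousLinearMap.smul_apply]
    have : c • (u x) = (c : ℂ) • (u x) := by simp [Complex.coe_smul]
    rw [this, inner_smul_right]
  rw [this]
  have hc' : 0 ≤ (c : ℂ) := by
    rw [Complex.le_def]; constructor <;> simp [hc]
  exact mul_nonneg hc' (h x)

/-- Positivity passes to limits in `TCsa`. -/
theorem posOp_of_tendsto {α : Type*} {l : Filter α} [l.NeBot] {f : α → TCsa H} {u : TCsa H}
    (hconv : Tendsto f l (𝓝 u)) (hpos : ∀ᶠ a in l, PosOp (f a).val) : PosOp u.val := by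
  apply posOp_val_of_qf
  intro x
  have h1 : Tendsto (fun a => qf x (f a)) l (𝓝 (qf x u)) :=
    ((qf x).continuous.tendsto u).comp hconv
  exact ge_of_tendsto h1 (hpos.mono fun a ha => qf_nonneg_of_posOp x ha)

section Moll

variable {S : ℝ → (H →L[ℂ] H) → (H →L[ℂ] H)} {DH : Set (H →L[ℂ] H)}
  {Hop : (H →L[ℂ] H) → (H →L[ℂ] H)}
variable (hS : IsC0Semigroup S) (hSb : IsBoundedSG S)

/-- `s ↦ S_s u` as a total function. -/
def gfun (u : TCsa H) : ℝ → TCsa H := fun s => sg hS hSb s u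

theorem gfun_zero (u : TCsa H) : gfun hS hSb u 0 = u := sg_of_nonpos hS hSb (lt_irrefl 0) u

theorem gfun_contOn (u : TCsa H) : ContinuousOn (gfun hS hSb u) (Set.Ici 0) := by
  intro s hs
  rcases eq_or_lt_of_le (Set.mem_Ici.mp hs) with heq | hlt
  · subst heq
    unfold ContinuousWithinAt
    rw [gfun_zero]
    exact sg_strong_Ici hS hSb u
  · have hca : ContinuousAt (gfun hS hSb u) s := sg_cont hS hSb hlt u
    exact hca.continuousWithinAt

theorem gfun_integrable (u : TCsa H) {a b : ℝ} (ha : 0 ≤ a) (hb : 0 ≤ b) :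
    IntervalIntegrable (gfun hS hSb u) MeasureTheory.volume a b := by
  refine ((gfun_contOn hS hSb u).mono ?_).intervalIntegrable
  intro x hx
  rcases le_total a b with hab | hab
  · rw [Set.uIcc_of_le hab] at hx; exact le_trans ha hx.1
  · rw [Set.uIcc_of_ge hab] at hx; exact le_trans hb hx.1

/-- The mollified element `∫₀^ε S_s u ds`. -/
def moll (u : TCsa H) (ε : ℝ) : TCsa H := ∫ s in (0:ℝ)..ε, gfun hS hSb u s

/-- Averaging: `t⁻¹ ∫_a^{a+t} S_s u ds → S_a u` as `t → 0⁺`. -/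
theorem avg_tendsto (u : TCsa H) {a : ℝ} (ha : 0 ≤ a) :
    Tendsto (fun t => t⁻¹ • ∫ s in a..(a+t), gfun hS hSb u s) (𝓝[>] (0:ℝ))
      (𝓝 (gfun hS hSb u a)) := by
  rw [Metric.tendsto_nhdsWithin_nhds]
  intro ε hε
  have hcw : ContinuousWithinAt (gfun hS hSb u) (Set.Ici 0) a :=
    gfun_contOn hS hSb u a (Set.mem_Ici.mpr ha)
  rw [Metric.continuousWithinAt_iff] at hcw
  obtain ⟨δ, hδ, hball⟩ := hcw (ε/2) (by linarith)
  refine ⟨δ, hδ, fun t ht hdist => ?_⟩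
  have ht' : 0 < t := Set.mem_Ioi.mp ht
  have htδ : t < δ := by
    rw [Real.dist_eq] at hdist
    calc t = |t - 0| := by rw [sub_zero, abs_of_pos ht']
      _ < δ := hdist
  have hint : IntervalIntegrable (gfun hS hSb u) MeasureTheory.volume a (a+t) :=
    gfun_integrable hS hSb u ha (by linarith)
  have hconst : IntervalIntegrable (fun _ : ℝ => gfun hS hSb u a)
      MeasureTheory.volume a (a+t) := intervalIntegrable_const
  have hsplit : (∫ s in a..(a+t), (gfun hS hSb u s - gfun hS hSb u a))
      = (∫ s in a..(a+t), gfun hS hSb u s) - t • gfun hS hSb u a := by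
    rw [intervalIntegral.integral_sub hint hconst, intervalIntegral.integral_const]
    congr 1
    rw [add_sub_cancel_left]
  have hkey : t⁻¹ • (∫ s in a..(a+t), gfun hS hSb u s) - gfun hS hSb u a
      = t⁻¹ • (∫ s in a..(a+t), (gfun hS hSb u s - gfun hS hSb u a)) := by
    rw [hsplit, smul_sub, smul_smul, inv_mul_cancel₀ (ne_of_gt ht'), one_smul]
  have hbound : ‖∫ s in a..(a+t), (gfun hS hSb u s - gfun hS hSb u a)‖ ≤ (ε/2) * |a + t - a| := by
    apply intervalIntegral.norm_integral_le_of_norm_le_const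
    intro s hs
    rw [Set.uIoc_of_le (by linarith : a ≤ a + t)] at hs
    have hs1 : a < s := hs.1
    have hs2 : s ≤ a + t := hs.2
    have hmem : s ∈ Set.Ici (0:ℝ) := Set.mem_Ici.mpr (by linarith)
    have hd : dist s a < δ := by
      rw [Real.dist_eq, abs_of_pos (by linarith : (0:ℝ) < s - a)]
      linarith
    have := hball hmem hd
    rw [dist_eq_norm] at this
    exact this.le
  rw [dist_eq_norm, hkey, norm_smul, Real.norm_eq_abs, abs_of_pos (inv_pos.mpr ht')]
  have h2 : |a + t - a| = t := by rw [add_sub_cancel_left, abs_of_pos ht']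
  rw [h2] at hbound
  calc t⁻¹ * ‖∫ s in a..(a+t), (gfun hS hSb u s - gfun hS hSb u a)‖
      ≤ t⁻¹ * ((ε/2) * t) := mul_le_mul_of_nonneg_left hbound (inv_pos.mpr ht').le
    _ = ε/2 := by field_simp
    _ < ε := by linarith

/-- `S_t (moll u ε) = ∫_t^{ε+t} S_s u ds`. -/
theorem sg_moll (u : TCsa H) {t ε : ℝ} (ht : 0 < t) (hε : 0 ≤ ε) :
    sg hS hSb t (moll hS hSb u ε) = ∫ s in t..(ε+t), gfun hS hSb u s := by
  rw [sg_of_pos hS hSb ht]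
  unfold moll
  rw [← ContinuousLinearMap.intervalIntegral_comp_comm _ (gfun_integrable hS hSb u le_rfl hε)]
  have hcongr : (∫ s in (0:ℝ)..ε, sgCLM hS hSb t ht (gfun hS hSb u s))
      = ∫ s in (0:ℝ)..ε, gfun hS hSb u (s + t) := by
    apply intervalIntegral.integral_congr
    intro s hs
    rw [Set.uIcc_of_le hε] at hs
    have hs0 : 0 ≤ s := hs.1
    rcases eq_or_lt_of_le hs0 with heq | hlt
    · subst heq
      show sgCLM hS hSb t ht (gfun hS hSb u 0) = gfun hS hSb u (0 + t)
      rw [gfun_zero, zero_add]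
      show sgCLM hS hSb t ht u = sg hS hSb t u
      rw [sg_of_pos hS hSb ht]
    · show sgCLM hS hSb t ht (gfun hS hSb u s) = gfun hS hSb u (s + t)
      rw [← sg_of_pos hS hSb ht]
      show sg hS hSb t (sg hS hSb s u) = sg hS hSb (s + t) u
      rw [← sg_comp hS hSb ht hlt]
      congr 1; ring
  rw [hcongr, intervalIntegral.integral_comp_add_right (fun s => gfun hS hSb u s) t, zero_add]

/-- `moll u ε - S_t (moll u ε) = ∫_0^t - ∫_ε^{ε+t}`. -/
theorem moll_sub (u : TCsa H) {t ε : ℝ} (ht : 0 < t) (hε : 0 ≤ ε) :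
    moll hS hSb u ε - sg hS hSb t (moll hS hSb u ε)
      = (∫ s in (0:ℝ)..t, gfun hS hSb u s) - ∫ s in ε..(ε+t), gfun hS hSb u s := by
  rw [sg_moll hS hSb u ht hε]
  unfold moll
  rw [sub_eq_sub_iff_add_eq_add]
  rw [intervalIntegral.integral_add_adjacent_intervals
    (gfun_integrable hS hSb u le_rfl hε) (gfun_integrable hS hSb u hε (by linarith)),
    intervalIntegral.integral_add_adjacent_intervals
    (gfun_integrable hS hSb u le_rfl ht.le) (gfun_integrable hS hSb u ht.le (by linarith))]

end Moll


/-! ### Section G : more helpers -/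

theorem posOp_isSelfAdjoint {u : H →L[ℂ] H} (h : PosOp u) : IsSelfAdjoint u := by
  have hreal : ∀ x : H, (starRingEnd ℂ) (inner ℂ x (u x) : ℂ) = inner ℂ x (u x) := by
    intro x
    have h1 := (Complex.le_def.mp (h x)).2
    rw [Complex.conj_eq_iff_im]
    simpa using h1.symm
  rw [ContinuousLinearMap.isSelfAdjoint_iff']
  have : ∀ x : H, (inner ℂ ((ContinuousLinearMap.adjoint u - u) x) x : ℂ) = 0 := by
    intro x
    rw [ContinuousLinearMap.sub_apply, inner_sub_left]
    have h2 : (inner ℂ (ContinuousLinearMap.adjoint u x) x : ℂ) = inner ℂ x (u x) :=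
      ContinuousLinearMap.adjoint_inner_left u x x
    have h3 : (inner ℂ (u x) x : ℂ) = (starRingEnd ℂ) (inner ℂ x (u x) : ℂ) :=
      (inner_conj_symm (u x) x).symm
    rw [h2, h3, hreal, sub_self]
  have hz := (inner_map_self_eq_zero
    ((ContinuousLinearMap.adjoint u - u) : H →L[ℂ] H).toLinearMap).mp (fun x => this x)
  have : ContinuousLinearMap.adjoint u - u = 0 := by
    ext x
    have := congrArg (fun T => T x) hz
    simpa using this
  have := sub_eq_zero.mp this
  exact this

theorem gpos_of_TCsa {u : TCsa H} (h : PosOp u.val) : Gpos u.val := ⟨u.2.1, h⟩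

section Helpers

variable {S : ℝ → (H →L[ℂ] H) → (H →L[ℂ] H)}
variable (hS : IsC0Semigroup S) (hSb : IsBoundedSG S)

open TCsa

/-- Applying `S_{τ a}` to a converging family, where `τ a → τ₀ > 0` from below. -/
theorem sg_family_tendsto {α : Type*} {l : Filter α} {τ : α → ℝ} {q : α → TCsa H}
    {w : TCsa H} {τ₀ : ℝ} (hτ₀ : 0 < τ₀)
    (hτ : Tendsto (fun a => τ₀ - τ a) l (𝓝[>] (0:ℝ)))
    (hτpos : ∀ᶠ a in l, 0 < τ a)
    (hq : Tendsto q l (𝓝 w)) :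
    Tendsto (fun a => sg hS hSb (τ a) (q a)) l (𝓝 (sg hS hSb τ₀ w)) := by
  rw [tendsto_iff_norm_sub_tendsto_zero]
  have hev : ∀ᶠ a in l, ‖sg hS hSb (τ a) (q a) - sg hS hSb τ₀ w‖ ≤
      M₀ hSb * ‖q a - w‖ + M₀ hSb * ‖sg hS hSb (τ₀ - τ a) w - w‖ := by
    filter_upwards [hτpos, hτ self_mem_nhdsWithin] with a ha hka
    have hka' : 0 < τ₀ - τ a := hka
    have hsplit : sg hS hSb τ₀ w = sg hS hSb (τ a) (sg hS hSb (τ₀ - τ a) w) := by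
      rw [← sg_comp hS hSb ha hka']
      congr 1; ring
    have harg : sg hS hSb (τ a) (q a) - sg hS hSb τ₀ w
        = sg hS hSb (τ a) (q a - w) + sg hS hSb (τ a) (w - sg hS hSb (τ₀ - τ a) w) := by
      rw [sg_sub hS hSb ha, sg_sub hS hSb ha, hsplit]; abel
    calc ‖sg hS hSb (τ a) (q a) - sg hS hSb τ₀ w‖
        = ‖sg hS hSb (τ a) (q a - w) + sg hS hSb (τ a) (w - sg hS hSb (τ₀ - τ a) w)‖ := by
          rw [harg]
      _ ≤ ‖sg hS hSb (τ a) (q a - w)‖ + ‖sg hS hSb (τ a) (w - sg hS hSb (τ₀ - τ a) w)‖ :=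
          norm_add_le _ _
      _ ≤ M₀ hSb * ‖q a - w‖ + M₀ hSb * ‖sg hS hSb (τ₀ - τ a) w - w‖ := by
          refine add_le_add (sg_bound hS hSb ha _) ?_
          calc ‖sg hS hSb (τ a) (w - sg hS hSb (τ₀ - τ a) w)‖
              ≤ M₀ hSb * ‖w - sg hS hSb (τ₀ - τ a) w‖ := sg_bound hS hSb ha _
            _ = M₀ hSb * ‖sg hS hSb (τ₀ - τ a) w - w‖ := by rw [norm_sub_rev]
  have hlim : Tendsto (fun a => M₀ hSb * ‖q a - w‖ + M₀ hSb * ‖sg hS hSb (τ₀ - τ a) w - w‖)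
      l (𝓝 0) := by
    have h1 : Tendsto (fun a => ‖q a - w‖) l (𝓝 0) := by
      rwa [tendsto_iff_norm_sub_tendsto_zero] at hq
    have h2 : Tendsto (fun a => ‖sg hS hSb (τ₀ - τ a) w - w‖) l (𝓝 0) :=
      (sg_strong_norm hS hSb w).comp hτ
    have := (h1.const_mul (M₀ hSb)).add (h2.const_mul (M₀ hSb))
    simpa using this
  exact squeeze_zero_norm' (by filter_upwards [hev] with a h using by simpa using h) hlim

/-- Perturbation: `S_{k a}(q a) - q a → 0` when `k a → 0⁺` and `q a → A`. -/
theorem sg_pert_tendsto {α : Type*} {l : Filter α} {k : α → ℝ} {q : α → TCsa H}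
    {A : TCsa H} (hk : Tendsto k l (𝓝[>] (0:ℝ))) (hq : Tendsto q l (𝓝 A)) :
    Tendsto (fun a => sg hS hSb (k a) (q a) - q a) l (𝓝 0) := by
  have hev : ∀ᶠ a in l, ‖sg hS hSb (k a) (q a) - q a‖ ≤
      M₀ hSb * ‖q a - A‖ + ‖sg hS hSb (k a) A - A‖ + ‖q a - A‖ := by
    filter_upwards [hk self_mem_nhdsWithin] with a ha
    have ha' : 0 < k a := ha
    have harg : sg hS hSb (k a) (q a) - q a
        = sg hS hSb (k a) (q a - A) + (sg hS hSb (k a) A - A) + (A - q a) := by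
      rw [sg_sub hS hSb ha']; abel
    calc ‖sg hS hSb (k a) (q a) - q a‖
        = ‖sg hS hSb (k a) (q a - A) + (sg hS hSb (k a) A - A) + (A - q a)‖ := by
          rw [harg]
      _ ≤ ‖sg hS hSb (k a) (q a - A)‖ + ‖sg hS hSb (k a) A - A‖ + ‖A - q a‖ :=
          norm_add₃_le
      _ ≤ M₀ hSb * ‖q a - A‖ + ‖sg hS hSb (k a) A - A‖ + ‖q a - A‖ := by
          refine add_le_add (add_le_add (sg_bound hS hSb ha' _) (le_refl _)) ?_
          rw [norm_sub_rev]
  have h1 : Tendsto (fun a => ‖q a - A‖) l (𝓝 0) := by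
    rwa [tendsto_iff_norm_sub_tendsto_zero] at hq
  have h2 : Tendsto (fun a => ‖sg hS hSb (k a) A - A‖) l (𝓝 0) :=
    (sg_strong_norm hS hSb A).comp hk
  have hlim : Tendsto (fun a => M₀ hSb * ‖q a - A‖ + ‖sg hS hSb (k a) A - A‖ + ‖q a - A‖)
      l (𝓝 0) := by
    have := ((h1.const_mul (M₀ hSb)).add h2).add h1
    simpa using this
  rw [tendsto_iff_norm_sub_tendsto_zero]
  exact squeeze_zero_norm' (by filter_upwards [hev] with a h using by simpa using h) hlim

end Helpers

section MollMem

variable {S : ℝ → (H →L[ℂ] H) → (H →L[ℂ] H)} {DH : Set (H →L[ℂ] H)}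
  {Hop : (H →L[ℂ] H) → (H →L[ℂ] H)}
variable (hS : IsC0Semigroup S) (hSb : IsBoundedSG S)

open TCsa

open scoped Classical in
/-- `A` applied as a map `TCsa → TCsa` (junk value outside the domain). -/
def opE {D : Set (H →L[ℂ] H)} {A : (H →L[ℂ] H) → (H →L[ℂ] H)} (hlin : IsLinMap D A)
    (w : TCsa H) : TCsa H :=
  if h : w.val ∈ D then ⟨A w.val, hlin.maps w.val h⟩ else 0

theorem opE_val {D : Set (H →L[ℂ] H)} {A : (H →L[ℂ] H) → (H →L[ℂ] H)}
    (hlin : IsLinMap D A) {w : TCsa H} (h : w.val ∈ D) :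
    (opE hlin w).val = A w.val := by
  unfold opE
  simp [h]

theorem opE_eq_HE (hgen : GeneratesNeg S DH Hop) {u : TCsa H} (hu : u.val ∈ DH) :
    opE hgen.lin u = HE hgen hu := by
  apply val_injective
  show (opE hgen.lin u).val = (HE hgen hu).val
  rw [opE_val hgen.lin hu, HE_val]

theorem gen_deriv' (hgen : GeneratesNeg S DH Hop) {u : TCsa H} (hu : u.val ∈ DH) :
    Tendsto (fun t : ℝ => t⁻¹ • (u - sg hS hSb t u)) (𝓝[>] (0:ℝ))
      (𝓝 (opE hgen.lin u)) := by
  rw [opE_eq_HE hgen hu]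
  exact gen_deriv hS hSb hgen hu

/-- The mollified element lies in the domain, where the generator acts as `u - S_ε u`. -/
theorem moll_mem (hgen : GeneratesNeg S DH Hop) (u : TCsa H) {ε : ℝ} (hε : 0 < ε) :
    ∃ _ : (moll hS hSb u ε).val ∈ DH,
      Hop (moll hS hSb u ε).val = (u - sg hS hSb ε u).val := by
  apply gen_max hS hSb hgen (v := u - sg hS hSb ε u)
  have h1 : Tendsto (fun t : ℝ => t⁻¹ • ∫ s in (0:ℝ)..t, gfun hS hSb u s) (𝓝[>] (0:ℝ))
      (𝓝 u) := by
    have := avg_tendsto hS hSb u (le_refl (0:ℝ))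
    rw [gfun_zero] at this
    simpa using this
  have h2 : Tendsto (fun t : ℝ => t⁻¹ • ∫ s in ε..(ε+t), gfun hS hSb u s) (𝓝[>] (0:ℝ))
      (𝓝 (sg hS hSb ε u)) := by
    have := avg_tendsto hS hSb u hε.le
    have hg : gfun hS hSb u ε = sg hS hSb ε u := rfl
    rwa [hg] at this
  have := h1.sub h2
  refine this.congr' ?_
  filter_upwards [self_mem_nhdsWithin] with t ht
  have ht' : 0 < t := ht
  rw [moll_sub hS hSb u ht' hε.le, smul_sub]

/-- The mollified element is positive for positive `u`. -/
theorem moll_posOp (hSp : IsPosPresSG S) {u : TCsa H} (hpos : PosOp u.val) {ε : ℝ}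
    (hε : 0 ≤ ε) : PosOp (moll hS hSb u ε).val := by
  apply posOp_of_re (moll hS hSb u ε).2.2
  intro x
  have hqf : qf x (moll hS hSb u ε) = ∫ s in (0:ℝ)..ε, qf x (gfun hS hSb u s) := by
    unfold moll
    rw [← ContinuousLinearMap.intervalIntegral_comp_comm (qf x)
      (gfun_integrable hS hSb u le_rfl hε)]
  have : (0:ℝ) ≤ qf x (moll hS hSb u ε) := by
    rw [hqf]
    apply intervalIntegral.integral_nonneg hε
    intro s hs
    rcases eq_or_lt_of_le hs.1 with heq | hlt
    · rw [← heq, gfun_zero]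
      exact qf_nonneg_of_posOp x hpos
    · apply qf_nonneg_of_posOp
      have : (gfun hS hSb u s).val = S s u.val := sg_val hS hSb hlt u
      rw [this]
      exact hSp s hlt u.val (gpos_of_TCsa hpos)
  exact this

/-- Approximation: `ε⁻¹ • moll u ε → u`. -/
theorem moll_approx (u : TCsa H) :
    Tendsto (fun ε => ε⁻¹ • moll hS hSb u ε) (𝓝[>] (0:ℝ)) (𝓝 u) := by
  have := avg_tendsto hS hSb u (le_refl (0:ℝ))
  rw [gfun_zero] at this
  refine this.congr' ?_
  filter_upwards [self_mem_nhdsWithin] with ε hε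
  unfold moll
  simp

end MollMem


/-! ### Section H : the main derivative computation -/

section Main

variable {S T : ℝ → (H →L[ℂ] H) → (H →L[ℂ] H)}
  {DH DL : Set (H →L[ℂ] H)} {Hop Lop : (H →L[ℂ] H) → (H →L[ℂ] H)}
variable (hS : IsC0Semigroup S) (hSb : IsBoundedSG S)
variable (hT : IsC0Semigroup T) (hTb : IsBoundedSG T)
variable (hgenH : GeneratesNeg S DH Hop) (hgenL : GeneratesNeg T DL Lop)
variable (hDsub : DH ⊆ DL)

open TCsa

theorem sg_neg {t : ℝ} (ht : 0 < t) (u : TCsa H) :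
    sg hS hSb t (-u) = -sg hS hSb t u := by
  have h1 : -u = (-1 : ℝ) • u := by rw [neg_one_smul]
  have h2 : -sg hS hSb t u = (-1 : ℝ) • sg hS hSb t u := by rw [neg_one_smul]
  rw [h1, h2, sg_smul hS hSb ht]

include hgenH hgenL hDsub in
/-- Slope of `r ↦ T_{t-r} S_r u₀` converges. -/
theorem slope_tendsto (u₀ : TCsa H) (hu₀ : u₀.val ∈ DH) {t s : ℝ} (hs : s ∈ Set.Ioo 0 t) :
    Tendsto (slope (fun r => sg hT hTb (t - r) (sg hS hSb r u₀)) s) (𝓝[≠] s)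
      (𝓝 (sg hT hTb (t - s)
        (opE hgenL.lin (sg hS hSb s u₀) - sg hS hSb s (opE hgenH.lin u₀)))) := by
  obtain ⟨hs0, hst⟩ := hs
  have hts : 0 < t - s := by linarith
  have hmemL : (sg hS hSb s u₀).val ∈ DL := by
    obtain ⟨hmemS, -⟩ := gen_invariance hS hSb hgenH hu₀ hs0
    exact hDsub hmemS
  set G : ℝ → TCsa H := fun r => sg hT hTb (t - r) (sg hS hSb r u₀) with hG
  set w : TCsa H := opE hgenL.lin (sg hS hSb s u₀) - sg hS hSb s (opE hgenH.lin u₀) with hw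
  rw [← nhdsLT_sup_nhdsGT s, tendsto_sup]
  constructor
  · -- LEFT branch : y < s
    have hIoo : Set.Ioo 0 s ∈ 𝓝[<] s := Ioo_mem_nhdsLT_of_mem ⟨hs0, le_refl s⟩
    have hshiftL : Tendsto (fun y => s - y) (𝓝[<] s) (𝓝[>] (0:ℝ)) := tendsto_rsub_lt s
    -- a y
    set a : ℝ → TCsa H := fun y =>
      sg hS hSb y ((s - y)⁻¹ • (u₀ - sg hS hSb (s - y) u₀)) with ha
    have hatend : Tendsto a (𝓝[<] s) (𝓝 (sg hS hSb s (opE hgenH.lin u₀))) := by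
      apply sg_family_tendsto hS hSb hs0 hshiftL
      · filter_upwards [hIoo] with y hy; exact hy.1
      · exact (gen_deriv' hS hSb hgenH hu₀).comp hshiftL
    -- main2 y
    set m2 : ℝ → TCsa H := fun y =>
      (s - y)⁻¹ • (sg hS hSb s u₀ - sg hT hTb (s - y) (sg hS hSb s u₀)) with hm2
    have hm2tend : Tendsto m2 (𝓝[<] s) (𝓝 (opE hgenL.lin (sg hS hSb s u₀))) :=
      (gen_deriv' hT hTb hgenL hmemL).comp hshiftL
    -- c y
    have hctend : Tendsto (fun y => a y - sg hT hTb (s - y) (a y)) (𝓝[<] s) (𝓝 0) := by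
      have := sg_pert_tendsto hT hTb hshiftL hatend
      have hneg := this.neg
      rw [neg_zero] at hneg
      refine hneg.congr ?_
      intro y; abel
    -- r y
    have hrtend : Tendsto (fun y => -a y + m2 y + (a y - sg hT hTb (s - y) (a y)))
        (𝓝[<] s) (𝓝 w) := by
      have := ((hatend.neg).add hm2tend).add hctend
      rw [add_zero] at this
      have hwe : -sg hS hSb s (opE hgenH.lin u₀) + opE hgenL.lin (sg hS hSb s u₀) = w := by
        rw [hw]; abel
      rwa [hwe] at this
    -- outer fixed CLM
    have houter : Tendsto (fun y => sg hT hTb (t - s)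
        (-a y + m2 y + (a y - sg hT hTb (s - y) (a y)))) (𝓝[<] s)
        (𝓝 (sg hT hTb (t - s) w)) := by
      simp only [sg_of_pos hT hTb hts]
      have := ((sgCLM hT hTb (t-s) hts).continuous.tendsto w).comp hrtend
      exact this.congr (fun y => rfl)
    refine houter.congr' ?_
    filter_upwards [hIoo] with y hy
    obtain ⟨hy0, hys⟩ := hy
    have hk : 0 < s - y := by linarith
    have hkne : s - y ≠ 0 := ne_of_gt hk
    have hty : 0 < t - y := by linarith
    -- identity
    have hcomp : sg hS hSb y (sg hS hSb (s - y) u₀) = sg hS hSb s u₀ := by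
      rw [← sg_comp hS hSb hy0 hk]; congr 1; ring
    have haexp : a y = (s - y)⁻¹ • (sg hS hSb y u₀ - sg hS hSb s u₀) := by
      show sg hS hSb y ((s - y)⁻¹ • (u₀ - sg hS hSb (s - y) u₀)) = _
      rw [sg_smul hS hSb hy0, sg_sub hS hSb hy0, hcomp]
    have hETa : sg hT hTb (s - y) (a y)
        = (s - y)⁻¹ • (sg hT hTb (s - y) (sg hS hSb y u₀)
            - sg hT hTb (s - y) (sg hS hSb s u₀)) := by
      rw [haexp, sg_smul hT hTb hk, sg_sub hT hTb hk]
    have hGs : G s = sg hT hTb (t - s) (sg hS hSb s u₀) := rfl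
    have hGy : G y = sg hT hTb (t - s) (sg hT hTb (s - y) (sg hS hSb y u₀)) := by
      show sg hT hTb (t - y) (sg hS hSb y u₀) = _
      rw [← sg_comp hT hTb hts hk]
      congr 1; ring
    have hslope : slope G s y = (y - s)⁻¹ • (G y - G s) := slope_def_module G s y
    have hm2y : m2 y = (s - y)⁻¹ • (sg hS hSb s u₀ - sg hT hTb (s - y) (sg hS hSb s u₀)) :=
      rfl
    have harg : -a y + m2 y + (a y - sg hT hTb (s - y) (a y))
        = (s - y)⁻¹ • (sg hS hSb s u₀ - sg hT hTb (s - y) (sg hS hSb y u₀)) := by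
      rw [hETa, hm2y, haexp]
      rw [smul_sub, smul_sub, smul_sub, smul_sub]
      abel
    have hinv : (y - s)⁻¹ = -((s - y)⁻¹) := by
      rw [← inv_neg]; congr 1; ring
    rw [harg, hslope, hGy, hGs, ← sg_sub hT hTb hts, hinv, neg_smul, ← smul_neg,
      ← sg_neg hT hTb hts, neg_sub, ← sg_smul hT hTb hts]
  · -- RIGHT branch : y > s
    have hIoo : Set.Ioo s t ∈ 𝓝[>] s := Ioo_mem_nhdsGT_of_mem ⟨le_refl s, hst⟩
    have hshiftR : Tendsto (fun y => y - s) (𝓝[>] s) (𝓝[>] (0:ℝ)) := tendsto_sub_gt s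
    set q : ℝ → TCsa H := fun y =>
      sg hS hSb s (-((y - s)⁻¹ • (u₀ - sg hS hSb (y - s) u₀)))
        + (y - s)⁻¹ • (sg hS hSb s u₀ - sg hT hTb (y - s) (sg hS hSb s u₀)) with hqdef
    have hq : Tendsto q (𝓝[>] s) (𝓝 w) := by
      have h1 : Tendsto (fun y => sg hS hSb s (-((y - s)⁻¹ • (u₀ - sg hS hSb (y - s) u₀))))
          (𝓝[>] s) (𝓝 (sg hS hSb s (-(opE hgenH.lin u₀)))) := by
        simp only [sg_of_pos hS hSb hs0]
        exact (((sgCLM hS hSb s hs0).continuous.tendsto _).comp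
          ((gen_deriv' hS hSb hgenH hu₀).comp hshiftR).neg).congr (fun y => rfl)
      have h2 : Tendsto (fun y => (y - s)⁻¹ •
          (sg hS hSb s u₀ - sg hT hTb (y - s) (sg hS hSb s u₀)))
          (𝓝[>] s) (𝓝 (opE hgenL.lin (sg hS hSb s u₀))) :=
        (gen_deriv' hT hTb hgenL hmemL).comp hshiftR
      have := h1.add h2
      have hwe : sg hS hSb s (-(opE hgenH.lin u₀)) + opE hgenL.lin (sg hS hSb s u₀) = w := by
        rw [sg_neg hS hSb hs0, hw]; abel
      rwa [hwe] at this
    have houter : Tendsto (fun y => sg hT hTb (t - y) (q y)) (𝓝[>] s)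
        (𝓝 (sg hT hTb (t - s) w)) := by
      apply sg_family_tendsto hT hTb hts ?_ ?_ hq
      · have heq : (fun y => (t - s) - (t - y)) = fun y => y - s := by funext y; ring
        rw [heq]; exact hshiftR
      · filter_upwards [hIoo] with y hy
        have := hy.2; linarith
    refine houter.congr' ?_
    filter_upwards [hIoo] with y hy
    obtain ⟨hsy, hyt⟩ := hy
    have hk : 0 < y - s := by linarith
    have hty : 0 < t - y := by linarith
    have hqexp : q y = (y - s)⁻¹ • (sg hS hSb y u₀ - sg hT hTb (y - s) (sg hS hSb s u₀)) := by
      have hyc : sg hS hSb s (sg hS hSb (y - s) u₀) = sg hS hSb y u₀ := by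
        rw [← sg_comp hS hSb hs0 hk]; congr 1; ring
      show sg hS hSb s (-((y - s)⁻¹ • (u₀ - sg hS hSb (y - s) u₀)))
          + (y - s)⁻¹ • (sg hS hSb s u₀ - sg hT hTb (y - s) (sg hS hSb s u₀)) = _
      rw [sg_neg hS hSb hs0, sg_smul hS hSb hs0, sg_sub hS hSb hs0, hyc]
      rw [smul_sub, smul_sub, smul_sub]
      abel
    have hGy : G y = sg hT hTb (t - y) (sg hS hSb y u₀) := rfl
    have hGs : G s = sg hT hTb (t - y) (sg hT hTb (y - s) (sg hS hSb s u₀)) := by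
      show sg hT hTb (t - s) (sg hS hSb s u₀) = _
      rw [← sg_comp hT hTb hty hk]
      congr 1; ring
    have hslope : slope G s y = (y - s)⁻¹ • (G y - G s) := slope_def_module G s y
    rw [hqexp, hslope, hGy, hGs, ← sg_sub hT hTb hty, ← sg_smul hT hTb hty]

end Main


section Main2

variable {S T : ℝ → (H →L[ℂ] H) → (H →L[ℂ] H)}
  {DH DL : Set (H →L[ℂ] H)} {Hop Lop : (H →L[ℂ] H) → (H →L[ℂ] H)}
variable (hS : IsC0Semigroup S) (hSb : IsBoundedSG S)
variable (hT : IsC0Semigroup T) (hTb : IsBoundedSG T)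
variable (hgenH : GeneratesNeg S DH Hop) (hgenL : GeneratesNeg T DL Lop)
variable (hDsub : DH ⊆ DL)

open TCsa

include hgenH hgenL hDsub in
theorem main_DH (hSp : IsPosPresSG S) (hTp : IsPosPresSG T)
    (hK : ∀ u ∈ DH, PosOp u → PosOp (Hop u - Lop u))
    {u₀ : TCsa H} (hu₀ : u₀.val ∈ DH) (hpos : PosOp u₀.val) {t : ℝ} (ht : 0 < t) :
    PosOp ((sg hT hTb t u₀ - sg hS hSb t u₀).val) := by
  apply posOp_of_re (sg hT hTb t u₀ - sg hS hSb t u₀).2.2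
  intro x
  set f : ℝ → ℝ := fun r => qf x (sg hT hTb (t - r) (sg hS hSb r u₀)) with hf
  have hderiv : ∀ s ∈ Set.Ioo 0 t, HasDerivAt f
      (qf x (sg hT hTb (t - s)
        (opE hgenL.lin (sg hS hSb s u₀) - sg hS hSb s (opE hgenH.lin u₀)))) s := by
    intro s hs
    rw [hasDerivAt_iff_tendsto_slope]
    have hv := slope_tendsto hS hSb hT hTb hgenH hgenL hDsub u₀ hu₀ hs
    have hcomp := ((qf x).continuous.tendsto _).comp hv
    refine hcomp.congr (fun y => ?_)
    show qf x (slope (fun r => sg hT hTb (t - r) (sg hS hSb r u₀)) s y) = slope f s y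
    rw [slope_def_module, slope_def_module, map_smul, map_sub]
  have hnonpos : ∀ s ∈ Set.Ioo 0 t,
      qf x (sg hT hTb (t - s)
        (opE hgenL.lin (sg hS hSb s u₀) - sg hS hSb s (opE hgenH.lin u₀))) ≤ 0 := by
    intro s hs
    obtain ⟨hs0, hst⟩ := hs
    have hts : 0 < t - s := by linarith
    obtain ⟨hmemS, hHcomm⟩ := gen_invariance hS hSb hgenH hu₀ hs0
    have hmemL : (sg hS hSb s u₀).val ∈ DL := hDsub hmemS
    have hvpos : PosOp (sg hS hSb s u₀).val := by
      rw [sg_val hS hSb hs0]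
      exact hSp s hs0 u₀.val (gpos_of_TCsa hpos)
    have hKpos : PosOp ((opE hgenH.lin (sg hS hSb s u₀)
        - opE hgenL.lin (sg hS hSb s u₀)).val) := by
      rw [val_sub, opE_val hgenH.lin hmemS, opE_val hgenL.lin hmemL]
      exact hK (sg hS hSb s u₀).val hmemS hvpos
    have hswap : opE hgenL.lin (sg hS hSb s u₀) - sg hS hSb s (opE hgenH.lin u₀)
        = -(opE hgenH.lin (sg hS hSb s u₀) - opE hgenL.lin (sg hS hSb s u₀)) := by
      apply val_injective
      show (opE hgenL.lin (sg hS hSb s u₀) - sg hS hSb s (opE hgenH.lin u₀)).val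
          = (-(opE hgenH.lin (sg hS hSb s u₀) - opE hgenL.lin (sg hS hSb s u₀))).val
      rw [val_neg, val_sub, val_sub]
      rw [opE_val hgenL.lin hmemL, opE_val hgenH.lin hmemS]
      have h3 : (sg hS hSb s (opE hgenH.lin u₀)).val = Hop (sg hS hSb s u₀).val := by
        rw [opE_eq_HE hgenH hu₀, ← hHcomm]
      rw [h3]
      abel
    rw [hswap]
    have hTsPos : PosOp ((sg hT hTb (t - s) (opE hgenH.lin (sg hS hSb s u₀)
        - opE hgenL.lin (sg hS hSb s u₀))).val) := by
      rw [sg_val hT hTb hts]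
      exact hTp (t - s) hts _
        ⟨(opE hgenH.lin (sg hS hSb s u₀) - opE hgenL.lin (sg hS hSb s u₀)).2.1, hKpos⟩
    have hge := qf_nonneg_of_posOp x hTsPos
    rw [sg_neg hT hTb hts, map_neg]
    linarith
  have hanti : AntitoneOn f (Set.Ioo 0 t) := by
    apply antitoneOn_of_deriv_nonpos (convex_Ioo 0 t)
    · exact fun s hs => ((hderiv s hs).continuousAt).continuousWithinAt
    · rw [interior_Ioo]
      exact fun s hs => ((hderiv s hs).differentiableAt).differentiableWithinAt
    · rw [interior_Ioo]
      intro s hs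
      rw [(hderiv s hs).deriv]
      exact hnonpos s hs
  have hlim0 : Tendsto f (𝓝[>] (0:ℝ)) (𝓝 (qf x (sg hT hTb t u₀))) := by
    have hin : Tendsto (fun r => sg hT hTb (t - r) (sg hS hSb r u₀)) (𝓝[>] (0:ℝ))
        (𝓝 (sg hT hTb t u₀)) := by
      apply sg_family_tendsto hT hTb ht ?_ ?_ (sg_strong hS hSb u₀)
      · have heq : (fun r : ℝ => t - (t - r)) = fun r => r := by funext r; ring
        rw [heq]
        exact tendsto_id
      · filter_upwards [Ioo_mem_nhdsGT_of_mem ⟨le_refl (0:ℝ), ht⟩] with r hr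
        have := hr.2; linarith
    exact (((qf x).continuous.tendsto _).comp hin).congr (fun y => rfl)
  have hlimt : Tendsto f (𝓝[<] t) (𝓝 (qf x (sg hS hSb t u₀))) := by
    have hq : Tendsto (fun r => sg hS hSb r u₀) (𝓝[<] t) (𝓝 (sg hS hSb t u₀)) :=
      (sg_cont hS hSb ht u₀).mono_left nhdsWithin_le_nhds
    have hk : Tendsto (fun r => t - r) (𝓝[<] t) (𝓝[>] (0:ℝ)) := tendsto_rsub_lt t
    have hpert := sg_pert_tendsto hT hTb hk hq
    have hsum := hpert.add hq
    rw [zero_add] at hsum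
    have hin : Tendsto (fun r => sg hT hTb (t - r) (sg hS hSb r u₀)) (𝓝[<] t)
        (𝓝 (sg hS hSb t u₀)) := by
      refine hsum.congr (fun r => ?_)
      abel
    exact (((qf x).continuous.tendsto _).comp hin).congr (fun y => rfl)
  have key : qf x (sg hS hSb t u₀) ≤ qf x (sg hT hTb t u₀) := by
    have h1 : ∀ᶠ a in 𝓝[>] (0:ℝ), qf x (sg hS hSb t u₀) ≤ f a := by
      filter_upwards [Ioo_mem_nhdsGT_of_mem ⟨le_refl (0:ℝ), ht⟩] with a ha
      refine le_of_tendsto hlimt ?_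
      filter_upwards [Ioo_mem_nhdsLT_of_mem ⟨ha.2, le_refl t⟩] with b hb
      exact hanti ⟨ha.1, ha.2⟩ ⟨lt_trans ha.1 hb.1, hb.2⟩ (le_of_lt hb.1)
    exact ge_of_tendsto hlim0 h1
  have hfinal : (inner ℂ x (((sg hT hTb t u₀ - sg hS hSb t u₀).val) x) : ℂ).re
      = qf x (sg hT hTb t u₀) - qf x (sg hS hSb t u₀) := by
    rw [← map_sub]
    rfl
  rw [hfinal]
  linarith

end Main2


/-- Lemma 2.3, (i) ⇔ (iii). For two positivity preserving bounded
`C₀`-semigroups `S, T` with generators `-Hop`, `-Lop` and `D(H) ⊆ D(L)`, one has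
`S_t ≤ T_t` for all `t > 0` if and only if `Hop - Lop` (on `D(H)`) is positivity
preserving. -/
theorem statement_8 (S T : ℝ → (H →L[ℂ] H) → (H →L[ℂ] H))
    (DH DL : Set (H →L[ℂ] H)) (Hop Lop : (H →L[ℂ] H) → (H →L[ℂ] H))
    (hS : IsC0Semigroup S) (hSb : IsBoundedSG S) (hSp : IsPosPresSG S)
    (hT : IsC0Semigroup T) (hTb : IsBoundedSG T) (hTp : IsPosPresSG T)
    (hgenH : GeneratesNeg S DH Hop) (hgenL : GeneratesNeg T DL Lop)
    (hDsub : DH ⊆ DL) :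
    (∀ t : ℝ, 0 < t → ∀ u, Gpos u → PosOp (T t u - S t u)) ↔
    (∀ u ∈ DH, PosOp u → PosOp (Hop u - Lop u)) := by
  constructor
  · -- (i) ⇒ (iii)
    intro hineq u hu hupos
    have hGsa : Gsa u := hgenH.dom.subset u hu
    have huDL : u ∈ DL := hDsub hu
    set uE : TCsa H := ⟨u, hGsa⟩ with huE
    have haS : Tendsto (fun t : ℝ => t⁻¹ • (uE - sg hS hSb t uE)) (𝓝[>] (0:ℝ))
        (𝓝 (opE hgenH.lin uE)) := gen_deriv' hS hSb hgenH hu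
    have haT : Tendsto (fun t : ℝ => t⁻¹ • (uE - sg hT hTb t uE)) (𝓝[>] (0:ℝ))
        (𝓝 (opE hgenL.lin uE)) := gen_deriv' hT hTb hgenL huDL
    have hdiff := haS.sub haT
    have hevent : ∀ᶠ t in 𝓝[>] (0:ℝ),
        PosOp ((t⁻¹ • (uE - sg hS hSb t uE) - t⁻¹ • (uE - sg hT hTb t uE)).val) := by
      filter_upwards [self_mem_nhdsWithin] with t ht
      have ht' : (0:ℝ) < t := ht
      have hval : (t⁻¹ • (uE - sg hS hSb t uE) - t⁻¹ • (uE - sg hT hTb t uE)).val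
          = t⁻¹ • (T t u - S t u) := by
        rw [TCsa.val_sub, TCsa.val_smul, TCsa.val_smul, TCsa.val_sub, TCsa.val_sub,
          sg_val hS hSb ht', sg_val hT hTb ht']
        show t⁻¹ • (u - S t u) - t⁻¹ • (u - T t u) = t⁻¹ • (T t u - S t u)
        rw [← smul_sub]
        congr 1
        abel
      rw [hval]
      exact posOp_smul (hineq t ht' u ⟨hGsa.1, hupos⟩) (inv_nonneg.mpr ht'.le)
    have hlim := posOp_of_tendsto hdiff hevent
    have hval2 : (opE hgenH.lin uE - opE hgenL.lin uE).val = Hop u - Lop u := by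
      rw [TCsa.val_sub, opE_val hgenH.lin hu, opE_val hgenL.lin huDL]
    rwa [hval2] at hlim
  · -- (iii) ⇒ (i)
    intro hK t ht u hu
    have hsa : IsSelfAdjoint u := posOp_isSelfAdjoint hu.2
    set uE : TCsa H := ⟨u, hu.1, hsa⟩ with huE
    set uεf : ℝ → TCsa H := fun ε => ε⁻¹ • moll hS hSb uE ε with huεf
    have happrox : Tendsto uεf (𝓝[>] (0:ℝ)) (𝓝 uE) := moll_approx hS hSb uE
    have h1 : Tendsto (fun ε => sg hT hTb t (uεf ε)) (𝓝[>] (0:ℝ))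
        (𝓝 (sg hT hTb t uE)) := by
      simp only [sg_of_pos hT hTb ht]
      exact (((sgCLM hT hTb t ht).continuous.tendsto uE).comp happrox).congr (fun y => rfl)
    have h2 : Tendsto (fun ε => sg hS hSb t (uεf ε)) (𝓝[>] (0:ℝ))
        (𝓝 (sg hS hSb t uE)) := by
      simp only [sg_of_pos hS hSb ht]
      exact (((sgCLM hS hSb t ht).continuous.tendsto uE).comp happrox).congr (fun y => rfl)
    have hconv := h1.sub h2
    have hevpos : ∀ᶠ ε in 𝓝[>] (0:ℝ),
        PosOp ((sg hT hTb t (uεf ε) - sg hS hSb t (uεf ε)).val) := by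
      filter_upwards [self_mem_nhdsWithin] with ε hε
      have hε' : (0:ℝ) < ε := hε
      obtain ⟨hmem, -⟩ := moll_mem hS hSb hgenH uE hε'
      have hmempos : PosOp (moll hS hSb uE ε).val :=
        moll_posOp hS hSb hSp (show PosOp uE.val from hu.2) hε'.le
      have hmem' : (uεf ε).val ∈ DH := by
        show (ε⁻¹ • moll hS hSb uE ε).val ∈ DH
        rw [TCsa.val_smul]
        exact hgenH.dom.smul_mem ε⁻¹ _ hmem
      have hpos' : PosOp (uεf ε).val := by
        show PosOp ((ε⁻¹ • moll hS hSb uE ε).val)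
        rw [TCsa.val_smul]
        exact posOp_smul hmempos (inv_nonneg.mpr hε'.le)
      exact main_DH hS hSb hT hTb hgenH hgenL hDsub hSp hTp hK hmem' hpos' ht
    have hlim := posOp_of_tendsto hconv hevpos
    have hval : (sg hT hTb t uE - sg hS hSb t uE).val = T t u - S t u := by
      rw [TCsa.val_sub, sg_val hT hTb ht, sg_val hS hSb ht]
    rwa [hval] at hlim
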